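/- arXiv:1408.1903 — 4 statements merged into one kernel-verified Lean document; each statement's English description precedes it below -/
import Mathlib

section
/- For all g ∈ ℕ, every Wall form endomorphism f : W^g → W^g of the standard Wall form of rank g is an automorphism. -/
/-!
Framework: `H`-pairs and Wall forms, following N. Perlmutter,
"Homological stability for the moduli spaces of products of spheres".

A form parameter `(G, ∂, π, ε)` is recorded together with the two
compatibility identities `∂(ε•h) = ∂(h)` and `π(∂(h)) = h + ε•h`, which hold
in the geometric situation considered in the paper and which are exactly the
conditions needed for the standard Wall forms `W^g` to exist.
-/

section HPairs

/-- An `H`-pair: a pair of abelian groups together with a ℤ-bilinear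
(i.e. biadditive) map `τ : M₋ × H → M₊`. -/
structure HPair (H : Type) [AddCommGroup H] where
  Neg : Type
  Pos : Type
  [negGrp : AddCommGroup Neg]
  [posGrp : AddCommGroup Pos]
  tau : Neg →+ H →+ Pos

attribute [instance] HPair.negGrp HPair.posGrp

variable {H : Type} [AddCommGroup H]

/-- An `H`-map of `H`-pairs. -/
structure HPairHom (M N : HPair H) where
  neg : M.Neg →+ N.Neg
  pos : M.Pos →+ N.Pos
  comm : ∀ x h, pos (M.tau x h) = N.tau (neg x) h

/-- An isomorphism of `H`-pairs. -/
structure HPairIso (M N : HPair H) where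
  toHom : HPairHom M N
  invHom : HPairHom N M
  left_neg : ∀ x, invHom.neg (toHom.neg x) = x
  right_neg : ∀ x, toHom.neg (invHom.neg x) = x
  left_pos : ∀ y, invHom.pos (toHom.pos y) = y
  right_pos : ∀ y, toHom.pos (invHom.pos y) = y

/-- An `H`-pair is finitely generated if both component groups are. -/
def HPair.FG (M : HPair H) : Prop :=
  AddGroup.FG M.Neg ∧ AddGroup.FG M.Pos

/-- The componentwise direct sum of two `H`-pairs. -/
@[reducible] def HPair.sum (M N : HPair H) : HPair H where
  Neg := M.Neg × N.Neg
  Pos := M.Pos × N.Pos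
  tau :=
    { toFun := fun x => (M.tau x.1).prod (N.tau x.2)
      map_zero' := by
        refine AddMonoidHom.ext fun h => ?_
        simp [Prod.ext_iff]
      map_add' := by
        intro x y
        refine AddMonoidHom.ext fun h => ?_
        simp [Prod.ext_iff] }

/-- The left inclusion `M → M ⊕ N`. -/
def HPairHom.inl (M N : HPair H) : HPairHom M (M.sum N) where
  neg := AddMonoidHom.inl M.Neg N.Neg
  pos := AddMonoidHom.inl M.Pos N.Pos
  comm := by
    intro x h
    simp [HPair.sum, Prod.ext_iff]

/-- The right inclusion `N → M ⊕ N`. -/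
def HPairHom.inr (M N : HPair H) : HPairHom N (M.sum N) where
  neg := AddMonoidHom.inr M.Neg N.Neg
  pos := AddMonoidHom.inr M.Pos N.Pos
  comm := by
    intro x h
    simp [HPair.sum, Prod.ext_iff]

/-- The `H`-pair `P⁰`, with `P⁰₋ = 0`, `P⁰₊ = ℤ` and `τ = 0`. -/
def P0 (H : Type) [AddCommGroup H] : HPair H where
  Neg := PUnit
  Pos := ℤ
  tau := 0

/-- The `H`-pair `P¹`, with `P¹₋ = ℤ`, `P¹₊ = H` and `τ(t, h) = t • h`. -/
def P1 (H : Type) [AddCommGroup H] : HPair H where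
  Neg := ℤ
  Pos := H
  tau := zmultiplesHom (H →+ H) (AddMonoidHom.id H)

/-- The generating-set length `d(H)`: the minimal `k` such that there is a
surjection `ℤ^k → H`. -/
noncomputable def dlen (H : Type) [AddCommGroup H] : ℕ :=
  sInf { k : ℕ | ∃ φ : (Fin k → ℤ) →+ H, Function.Surjective φ }

end HPairs

section WallForms

variable {H : Type} [AddCommGroup H]

/-- A form parameter `(G, ∂, π, ε)` for the category of `H`-pairs.  The two
compatibility identities `bd_eps` and `pi_bd` hold in the geometric setting of
the paper and are needed for the standard Wall forms to exist. -/
structure FormParameter (H : Type) [AddCommGroup H] where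
  G : HPair H
  bd : H →+ G.Pos
  pi : G.Pos →+ H
  eps : ℤ
  eps_pm : eps = 1 ∨ eps = -1
  bd_eps : ∀ h : H, bd (eps • h) = bd h
  pi_bd : ∀ h : H, pi (bd h) = h + eps • h

variable {P : FormParameter H}

/-- A Wall form structure (with parameter `P`) on the `H`-pair `C`. -/
structure WallAux (P : FormParameter H) (C : HPair H) where
  lam : C.Neg →+ C.Pos →+ ℤ
  mu : C.Pos →+ C.Pos →+ H
  alphaNeg : C.Neg →+ P.G.Neg
  alphaPos : C.Pos → P.G.Pos
  mu_symm : ∀ y y', mu y y' = P.eps • mu y' y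
  lam_tau : ∀ x x' h, lam x (C.tau x' h) = 0
  mu_tau : ∀ x h y, mu (C.tau x h) y = lam x y • h
  alphaPos_add : ∀ y y', alphaPos (y + y') = alphaPos y + alphaPos y' + P.bd (mu y y')
  mu_diag : ∀ y, mu y y = P.pi (alphaPos y)
  alphaPos_tau : ∀ x h, alphaPos (C.tau x h) = P.G.tau (alphaNeg x) h

/-- A Wall form with parameter `P`: a finitely generated `H`-pair together
with a Wall form structure. -/
structure WallForm (P : FormParameter H) where
  carrier : HPair H
  fgNeg : AddGroup.FG carrier.Neg
  fgPos : AddGroup.FG carrier.Pos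
  str : WallAux P carrier

/-- The property of an `H`-map to preserve all values of `λ`, `μ`, `α₋`, `α₊`. -/
def IsWallHom {C D : HPair H} (S : WallAux P C) (T : WallAux P D)
    (f : HPairHom C D) : Prop :=
  (∀ x y, T.lam (f.neg x) (f.pos y) = S.lam x y) ∧
  (∀ y y', T.mu (f.pos y) (f.pos y') = S.mu y y') ∧
  (∀ x, T.alphaNeg (f.neg x) = S.alphaNeg x) ∧
  (∀ y, T.alphaPos (f.pos y) = S.alphaPos y)

/-- A morphism of Wall forms. -/
structure WallHom (M N : WallForm P) where
  hom : HPairHom M.carrier N.carrier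
  isWall : IsWallHom M.str N.str hom

/-- An isomorphism of Wall forms: a morphism with a two-sided inverse morphism. -/
structure WallIso (M N : WallForm P) where
  toHom : WallHom M N
  invHom : WallHom N M
  left_neg : ∀ x, invHom.hom.neg (toHom.hom.neg x) = x
  right_neg : ∀ x, toHom.hom.neg (invHom.hom.neg x) = x
  left_pos : ∀ y, invHom.hom.pos (toHom.hom.pos y) = y
  right_pos : ∀ y, toHom.hom.pos (invHom.hom.pos y) = y

end WallForms
section Extra

variable {H : Type} [AddCommGroup H] {P : FormParameter H}

/-- A subgroup of a finitely generated abelian group is finitely generated. -/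
theorem addGroup_fg_subgroup {A : Type} [AddCommGroup A] (hA : AddGroup.FG A)
    (S : AddSubgroup A) : AddGroup.FG S := by
  haveI : Module.Finite ℤ A := Module.Finite.iff_addGroup_fg.mpr hA
  haveI : IsNoetherian ℤ A := isNoetherian_of_isNoetherianRing_of_finite ℤ A
  have h : (AddSubgroup.toIntSubmodule S).FG := IsNoetherian.noetherian _
  have h2 : Module.Finite ℤ (AddSubgroup.toIntSubmodule S) := Module.Finite.iff_fg.mpr h
  exact Module.Finite.iff_addGroup_fg.mp h2

theorem addGroup_fg_of_module_finite {A : Type} [AddCommGroup A]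
    [Module.Finite ℤ A] : AddGroup.FG A :=
  Module.Finite.iff_addGroup_fg.mp inferInstance

end Extra

section StdWall

variable {H : Type} [AddCommGroup H]

/-- The underlying `H`-pair of the standard Wall form of rank `g`:
`W^g₋ = ℤ^g` and `W^g₊ = ℤ^g × H^g`  (the first factor records the
`b`-coordinates, the second the `τ(a_i, -)`-coordinates). -/
@[reducible] def stdPair (H : Type) [AddCommGroup H] (g : ℕ) : HPair H where
  Neg := Fin g → ℤ
  Pos := (Fin g → ℤ) × (Fin g → H)
  tau :=
    { toFun := fun x =>
        { toFun := fun h => (0, fun i => x i • h)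
          map_zero' := by
            refine Prod.ext rfl ?_
            funext i
            simp
          map_add' := by
            intro h h'
            refine Prod.ext (by simp) ?_
            funext i
            simp [smul_add] }
      map_zero' := by
        refine AddMonoidHom.ext fun h => ?_
        refine Prod.ext rfl ?_
        funext i
        simp
      map_add' := by
        intro x x'
        refine AddMonoidHom.ext fun h => ?_
        refine Prod.ext (by simp) ?_
        funext i
        simp [add_smul] }

variable (P : FormParameter H)

/-- The standard Wall form `W^g` of rank `g` with parameter `P`. -/
def stdWall [AddGroup.FG H] (g : ℕ) : WallForm P where
  carrier := stdPair H g
  fgNeg := by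
    have : Module.Finite ℤ (Fin g → ℤ) := inferInstance
    exact addGroup_fg_of_module_finite
  fgPos := by
    haveI : Module.Finite ℤ H := Module.Finite.iff_addGroup_fg.mpr ‹AddGroup.FG H›
    have : Module.Finite ℤ ((Fin g → ℤ) × (Fin g → H)) := inferInstance
    exact addGroup_fg_of_module_finite
  str :=
    { lam :=
        { toFun := fun x =>
            { toFun := fun w => ∑ i, x i * w.1 i
              map_zero' := by simp
              map_add' := by
                intro w w'
                simp [mul_add, Finset.sum_add_distrib] }
          map_zero' := by
            refine AddMonoidHom.ext fun w => ?_
            show (∑ i, (0 : Fin g → ℤ) i * w.1 i) = 0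
            simp
          map_add' := by
            intro x x'
            refine AddMonoidHom.ext fun w => ?_
            simp [add_mul, Finset.sum_add_distrib] }
      mu :=
        { toFun := fun w =>
            { toFun := fun w' => (∑ i, w'.1 i • w.2 i) + P.eps • ∑ i, w.1 i • w'.2 i
              map_zero' := by simp
              map_add' := by
                intro w' w''
                simp only [Prod.fst_add, Prod.snd_add, Pi.add_apply, add_smul, smul_add,
                  Finset.sum_add_distrib]
                abel }
          map_zero' := by
            refine AddMonoidHom.ext fun w' => ?_
            simp
          map_add' := by
            intro w w'
            refine AddMonoidHom.ext fun w'' => ?_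
            simp only [Prod.fst_add, Prod.snd_add, Pi.add_apply, add_smul, smul_add,
              Finset.sum_add_distrib, AddMonoidHom.coe_mk, ZeroHom.coe_mk,
              AddMonoidHom.add_apply]
            abel }
      alphaNeg := 0
      alphaPos := fun w => P.bd (∑ i, w.1 i • w.2 i)
      mu_symm := by
        intro y y'
        have he : P.eps * P.eps = 1 := by
          rcases P.eps_pm with h | h <;> simp [h]
        show (∑ i, y'.1 i • y.2 i) + P.eps • ∑ i, y.1 i • y'.2 i
            = P.eps • ((∑ i, y.1 i • y'.2 i) + P.eps • ∑ i, y'.1 i • y.2 i)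
        rw [smul_add, smul_smul, he, one_smul, add_comm]
      lam_tau := by
        intro x x' h
        show (∑ i, x i * (0 : Fin _ → ℤ) i) = 0
        simp
      mu_tau := by
        intro x h y
        show (∑ i, y.1 i • (fun i => x i • h) i) + P.eps • ∑ i, (0 : Fin _ → ℤ) i • y.2 i
            = (∑ i, x i * y.1 i) • h
        simp only [Pi.zero_apply, zero_smul, Finset.sum_const_zero, smul_zero, add_zero]
        rw [Finset.sum_smul]
        congr 1
        funext i
        rw [smul_smul, mul_comm]
      alphaPos_add := by
        intro y y'
        show P.bd (∑ i, (y.1 i + y'.1 i) • (y.2 i + y'.2 i))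
            = P.bd (∑ i, y.1 i • y.2 i) + P.bd (∑ i, y'.1 i • y'.2 i)
              + P.bd ((∑ i, y'.1 i • y.2 i) + P.eps • ∑ i, y.1 i • y'.2 i)
        have expand : ∀ i : Fin _, (y.1 i + y'.1 i) • (y.2 i + y'.2 i)
            = (y.1 i • y.2 i + y'.1 i • y'.2 i) + (y'.1 i • y.2 i + y.1 i • y'.2 i) := by
          intro i
          rw [add_smul, smul_add, smul_add]
          abel
        rw [Finset.sum_congr rfl fun i _ => expand i, Finset.sum_add_distrib,
          Finset.sum_add_distrib, Finset.sum_add_distrib, map_add, map_add, map_add, map_add,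
          P.bd_eps]
      mu_diag := by
        intro y
        show (∑ i, y.1 i • y.2 i) + P.eps • ∑ i, y.1 i • y.2 i
            = P.pi (P.bd (∑ i, y.1 i • y.2 i))
        rw [P.pi_bd]
      alphaPos_tau := by
        intro x h
        show P.bd (∑ i, (0 : Fin _ → ℤ) i • (fun i => x i • h) i) = P.G.tau ((0 : _ →+ _) x) h
        simp }

variable {P}

/-- The `i`-th standard generator `a_i ∈ W^g₋`. -/
def stdA [AddGroup.FG H] {g : ℕ} (i : Fin g) : (stdWall P g).carrier.Neg :=
  Pi.single i 1

/-- The `i`-th standard generator `b_i ∈ W^g₊`. -/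
def stdB [AddGroup.FG H] {g : ℕ} (i : Fin g) : (stdWall P g).carrier.Pos :=
  (Pi.single i 1, 0)

end StdWall
section SubPairs

variable {H : Type} [AddCommGroup H] {P : FormParameter H}

/-- A sub-`H`-pair of the `H`-pair `C`. -/
structure SubPair (C : HPair H) where
  neg : AddSubgroup C.Neg
  pos : AddSubgroup C.Pos
  tau_mem : ∀ x ∈ neg, ∀ h, C.tau x h ∈ pos

/-- The componentwise intersection of two sub-`H`-pairs. -/
def SubPair.inf {C : HPair H} (N N' : SubPair C) : SubPair C where
  neg := N.neg ⊓ N'.neg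
  pos := N.pos ⊓ N'.pos
  tau_mem := fun x hx h => ⟨N.tau_mem x hx.1 h, N'.tau_mem x hx.2 h⟩

/-- The image of an `H`-map, as a sub-`H`-pair of the codomain. -/
def HPairHom.rangeSub {C D : HPair H} (f : HPairHom C D) : SubPair D where
  neg := f.neg.range
  pos := f.pos.range
  tau_mem := by
    rintro x ⟨a, rfl⟩ h
    exact ⟨C.tau a h, f.comm a h⟩

/-- The kernel of an `H`-map, as a sub-`H`-pair of the domain. -/
def HPairHom.kerSub {C D : HPair H} (f : HPairHom C D) : SubPair C where
  neg := f.neg.ker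
  pos := f.pos.ker
  tau_mem := by
    intro x hx h
    have hx' : f.neg x = 0 := hx
    have h2 : f.pos (C.tau x h) = D.tau (f.neg x) h := f.comm x h
    rw [hx'] at h2
    have h3 : f.pos (C.tau x h) = 0 := by
      rw [h2, map_zero, AddMonoidHom.zero_apply]
    exact h3

/-- The orthogonal complement of a sub-`H`-pair, with respect to a Wall form
structure `S` on the ambient `H`-pair. -/
def SubPair.perp {C : HPair H} (S : WallAux P C) (N : SubPair C) : SubPair C where
  neg :=
    { carrier := { x | ∀ w ∈ N.pos, S.lam x w = 0 }
      add_mem' := by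
        intro a b ha hb w hw
        rw [map_add, AddMonoidHom.add_apply, ha w hw, hb w hw, add_zero]
      zero_mem' := by
        intro w hw
        rw [map_zero, AddMonoidHom.zero_apply]
      neg_mem' := by
        intro a ha w hw
        rw [map_neg, AddMonoidHom.neg_apply, ha w hw, neg_zero] }
  pos :=
    { carrier := { y | (∀ v ∈ N.neg, S.lam v y = 0) ∧ ∀ w ∈ N.pos, S.mu y w = 0 }
      add_mem' := by
        intro a b ha hb
        refine ⟨fun v hv => ?_, fun w hw => ?_⟩
        · rw [map_add, ha.1 v hv, hb.1 v hv, add_zero]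
        · rw [map_add, AddMonoidHom.add_apply, ha.2 w hw, hb.2 w hw, add_zero]
      zero_mem' := by
        refine ⟨fun v hv => ?_, fun w hw => ?_⟩
        · rw [map_zero]
        · rw [map_zero, AddMonoidHom.zero_apply]
      neg_mem' := by
        intro a ha
        refine ⟨fun v hv => ?_, fun w hw => ?_⟩
        · rw [map_neg, ha.1 v hv, neg_zero]
        · rw [map_neg, AddMonoidHom.neg_apply, ha.2 w hw, neg_zero] }
  tau_mem := by
    intro x hx h
    refine ⟨fun v hv => S.lam_tau v x h, fun w hw => ?_⟩
    rw [S.mu_tau x h w, hx w hw, zero_smul]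

/-- Orthogonality of two sub-`H`-pairs with respect to a Wall form structure
`S`: trivial intersection and mutual containment in orthogonal complements. -/
def OrthogonalIn {C : HPair H} (S : WallAux P C) (N N' : SubPair C) : Prop :=
  N.neg ⊓ N'.neg = ⊥ ∧ N.pos ⊓ N'.pos = ⊥ ∧
  N.neg ≤ (N'.perp S).neg ∧ N.pos ≤ (N'.perp S).pos ∧
  N'.neg ≤ (N.perp S).neg ∧ N'.pos ≤ (N.perp S).pos

/-- The underlying `H`-pair of a sub-`H`-pair. -/
@[reducible] def SubPair.toPair {C : HPair H} (N : SubPair C) : HPair H where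
  Neg := N.neg
  Pos := N.pos
  tau :=
    { toFun := fun x =>
        { toFun := fun h => ⟨C.tau x h, N.tau_mem x x.2 h⟩
          map_zero' := by
            apply Subtype.ext
            simp
          map_add' := by
            intro h h'
            apply Subtype.ext
            simp }
      map_zero' := by
        refine AddMonoidHom.ext fun h => ?_
        apply Subtype.ext
        simp
      map_add' := by
        intro x x'
        refine AddMonoidHom.ext fun h => ?_
        apply Subtype.ext
        simp }

/-- The restriction of a Wall form structure to a sub-`H`-pair. -/
def SubPair.restrict {C : HPair H} (S : WallAux P C) (N : SubPair C) :
    WallAux P N.toPair where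
  lam :=
    { toFun := fun x => (S.lam (x : C.Neg)).comp N.pos.subtype
      map_zero' := by
        refine AddMonoidHom.ext fun y => ?_
        simp
      map_add' := by
        intro x x'
        refine AddMonoidHom.ext fun y => ?_
        simp }
  mu :=
    { toFun := fun y => (S.mu (y : C.Pos)).comp N.pos.subtype
      map_zero' := by
        refine AddMonoidHom.ext fun y => ?_
        simp
      map_add' := by
        intro y y'
        refine AddMonoidHom.ext fun y'' => ?_
        simp }
  alphaNeg := S.alphaNeg.comp N.neg.subtype
  alphaPos := fun y => S.alphaPos (y : C.Pos)
  mu_symm := fun y y' => S.mu_symm (y : C.Pos) y'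
  lam_tau := fun x x' h => S.lam_tau (x : C.Neg) x' h
  mu_tau := fun x h y => S.mu_tau (x : C.Neg) h y
  alphaPos_add := fun y y' => S.alphaPos_add (y : C.Pos) y'
  mu_diag := fun y => S.mu_diag (y : C.Pos)
  alphaPos_tau := fun x h => S.alphaPos_tau (x : C.Neg) h

/-- A sub-`H`-pair of (the carrier of) a Wall form is itself a Wall form, via
the restricted structure maps. -/
def SubPair.toWall {M : WallForm P} (N : SubPair M.carrier) : WallForm P where
  carrier := N.toPair
  fgNeg := addGroup_fg_subgroup M.fgNeg N.neg
  fgPos := addGroup_fg_subgroup M.fgPos N.pos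
  str := N.restrict M.str

end SubPairs
section SumAndRank

variable {H : Type} [AddCommGroup H] {P : FormParameter H}

/-- The orthogonal direct sum of two Wall forms. -/
def WallForm.sum (M N : WallForm P) : WallForm P where
  carrier := M.carrier.sum N.carrier
  fgNeg := by
    haveI : Module.Finite ℤ M.carrier.Neg := Module.Finite.iff_addGroup_fg.mpr M.fgNeg
    haveI : Module.Finite ℤ N.carrier.Neg := Module.Finite.iff_addGroup_fg.mpr N.fgNeg
    have : Module.Finite ℤ (M.carrier.Neg × N.carrier.Neg) := inferInstance
    exact Module.Finite.iff_addGroup_fg.mp this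
  fgPos := by
    haveI : Module.Finite ℤ M.carrier.Pos := Module.Finite.iff_addGroup_fg.mpr M.fgPos
    haveI : Module.Finite ℤ N.carrier.Pos := Module.Finite.iff_addGroup_fg.mpr N.fgPos
    have : Module.Finite ℤ (M.carrier.Pos × N.carrier.Pos) := inferInstance
    exact Module.Finite.iff_addGroup_fg.mp this
  str :=
    { lam :=
        { toFun := fun x => (M.str.lam x.1).coprod (N.str.lam x.2)
          map_zero' := by
            refine AddMonoidHom.ext fun y => ?_
            simp
          map_add' := by
            intro x x'
            refine AddMonoidHom.ext fun y => ?_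
            simp
            abel }
      mu :=
        { toFun := fun y => (M.str.mu y.1).coprod (N.str.mu y.2)
          map_zero' := by
            refine AddMonoidHom.ext fun y' => ?_
            simp
          map_add' := by
            intro y y'
            refine AddMonoidHom.ext fun y'' => ?_
            simp
            abel }
      alphaNeg := (M.str.alphaNeg).coprod (N.str.alphaNeg)
      alphaPos := fun y => M.str.alphaPos y.1 + N.str.alphaPos y.2
      mu_symm := by
        intro y y'
        show M.str.mu y.1 y'.1 + N.str.mu y.2 y'.2
            = P.eps • (M.str.mu y'.1 y.1 + N.str.mu y'.2 y.2)
        rw [smul_add, M.str.mu_symm y.1 y'.1, N.str.mu_symm y.2 y'.2]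
      lam_tau := by
        intro x x' h
        show M.str.lam x.1 (M.carrier.tau x'.1 h) + N.str.lam x.2 (N.carrier.tau x'.2 h) = 0
        rw [M.str.lam_tau, N.str.lam_tau, add_zero]
      mu_tau := by
        intro x h y
        show M.str.mu (M.carrier.tau x.1 h) y.1 + N.str.mu (N.carrier.tau x.2 h) y.2
            = (M.str.lam x.1 y.1 + N.str.lam x.2 y.2) • h
        rw [M.str.mu_tau, N.str.mu_tau, add_smul]
      alphaPos_add := by
        intro y y'
        show M.str.alphaPos (y.1 + y'.1) + N.str.alphaPos (y.2 + y'.2)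
            = (M.str.alphaPos y.1 + N.str.alphaPos y.2)
              + (M.str.alphaPos y'.1 + N.str.alphaPos y'.2)
              + P.bd (M.str.mu y.1 y'.1 + N.str.mu y.2 y'.2)
        rw [M.str.alphaPos_add, N.str.alphaPos_add, map_add]
        abel
      mu_diag := by
        intro y
        show M.str.mu y.1 y.1 + N.str.mu y.2 y.2
            = P.pi (M.str.alphaPos y.1 + N.str.alphaPos y.2)
        rw [map_add, M.str.mu_diag, N.str.mu_diag]
      alphaPos_tau := by
        intro x h
        show M.str.alphaPos (M.carrier.tau x.1 h) + N.str.alphaPos (N.carrier.tau x.2 h)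
            = P.G.tau (M.str.alphaNeg x.1 + N.str.alphaNeg x.2) h
        rw [M.str.alphaPos_tau, N.str.alphaPos_tau, map_add, AddMonoidHom.add_apply] }

variable [AddGroup.FG H]

/-- `rankGE M g` expresses the inequality `r(M) ≥ g` for the rank of a Wall
form: there exists a morphism of Wall forms `W^g → M`. -/
def rankGE (M : WallForm P) (g : ℕ) : Prop :=
  Nonempty (WallHom (stdWall P g) M)

/-- `srankGE M g` expresses the inequality `r̄(M) ≥ g` for the stable rank of
a Wall form: `r(M ⊕ W^j) ≥ g + j` for some `j`. -/
def srankGE (M : WallForm P) (g : ℕ) : Prop :=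
  ∃ j : ℕ, rankGE (M.sum (stdWall P j)) (g + j)

end SumAndRank

section Duality

variable {H : Type} [AddCommGroup H] {P : FormParameter H}

/-- The duality map `T⁰ : M₋ → Hom(M, P⁰)` of a Wall form. -/
def dualT0 (M : WallForm P) (v : M.carrier.Neg) : HPairHom M.carrier (P0 H) where
  neg := 0
  pos := M.str.lam v
  comm := by
    intro x h
    show M.str.lam v (M.carrier.tau x h) = ((P0 H).tau 0) h
    rw [M.str.lam_tau]
    show (0 : ℤ) = ((0 : _ →+ (H →+ ℤ)) 0) h
    rfl

/-- The duality map `T¹ : M₊ → Hom(M, P¹)` of a Wall form. -/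
def dualT1 (M : WallForm P) (w : M.carrier.Pos) : HPairHom M.carrier (P1 H) where
  neg := M.str.lam.flip w
  pos := M.str.mu.flip w
  comm := by
    intro x h
    show M.str.mu (M.carrier.tau x h) w = (P1 H).tau (M.str.lam x w) h
    rw [M.str.mu_tau]
    show M.str.lam x w • h = (M.str.lam x w • AddMonoidHom.id H) h
    simp

end Duality

section Aux8

variable {H : Type} [AddCommGroup H]

/-- A Wall endomorphism whose components are bijective is an automorphism. -/
noncomputable def wallIsoOfBijective {P : FormParameter H} {M : WallForm P} (f : WallHom M M)
    (hn : Function.Bijective f.hom.neg) (hp : Function.Bijective f.hom.pos) :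
    WallIso M M := by
  refine
    let en : M.carrier.Neg ≃+ M.carrier.Neg := AddEquiv.ofBijective f.hom.neg hn
    let ep : M.carrier.Pos ≃+ M.carrier.Pos := AddEquiv.ofBijective f.hom.pos hp
    have hen : ∀ x, en x = f.hom.neg x := fun _ => rfl
    have hep : ∀ y, ep y = f.hom.pos y := fun _ => rfl
    { toHom := f
      invHom :=
        { hom :=
            { neg := en.symm.toAddMonoidHom
              pos := ep.symm.toAddMonoidHom
              comm := by
                intro x h
                apply hp.injective
                have h1 : f.hom.pos (ep.symm (M.carrier.tau x h)) = M.carrier.tau x h := by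
                  rw [← hep]; exact ep.apply_symm_apply _
                have h2 : f.hom.pos (M.carrier.tau (en.symm x) h)
                    = M.carrier.tau (f.hom.neg (en.symm x)) h := f.hom.comm _ _
                have h3 : f.hom.neg (en.symm x) = x := by
                  rw [← hen]; exact en.apply_symm_apply _
                show f.hom.pos (ep.symm (M.carrier.tau x h))
                    = f.hom.pos (M.carrier.tau (en.symm x) h)
                rw [h1, h2, h3] }
          isWall := by
            obtain ⟨hl, hm, han, hap⟩ := f.isWall
            refine ⟨fun x y => ?_, fun y y' => ?_, fun x => ?_, fun y => ?_⟩
            · have := hl (en.symm x) (ep.symm y)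
              rw [← hen, ← hep, en.apply_symm_apply, ep.apply_symm_apply] at this
              exact this.symm
            · have := hm (ep.symm y) (ep.symm y')
              rw [← hep, ← hep, ep.apply_symm_apply, ep.apply_symm_apply] at this
              exact this.symm
            · have := han (en.symm x)
              rw [← hen, en.apply_symm_apply] at this
              exact this.symm
            · have := hap (ep.symm y)
              rw [← hep, ep.apply_symm_apply] at this
              exact this.symm }
      left_neg := fun x => by
        show en.symm (f.hom.neg x) = x
        rw [← hen]; exact en.symm_apply_apply x
      right_neg := fun x => by
        show f.hom.neg (en.symm x) = x
        rw [← hen]; exact en.apply_symm_apply x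
      left_pos := fun y => by
        show ep.symm (f.hom.pos y) = y
        rw [← hep]; exact ep.symm_apply_apply y
      right_pos := fun y => by
        show f.hom.pos (ep.symm y) = y
        rw [← hep]; exact ep.apply_symm_apply y }

/-- The action of an integer matrix on `H^g`. -/
def actH {g : ℕ} (M : Matrix (Fin g) (Fin g) ℤ) (v : Fin g → H) : Fin g → H :=
  fun i => ∑ j, M i j • v j

lemma actH_mul {g : ℕ} (M N : Matrix (Fin g) (Fin g) ℤ) (v : Fin g → H) :
    actH M (actH N v) = actH (M * N) v := by
  funext i
  simp only [actH, Matrix.mul_apply, Finset.smul_sum, smul_smul, Finset.sum_smul]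
  rw [Finset.sum_comm]

lemma actH_one {g : ℕ} (v : Fin g → H) : actH (1 : Matrix (Fin g) (Fin g) ℤ) v = v := by
  funext i
  simp [actH, Matrix.one_apply, ite_smul]

end Aux8

/-- Every Wall form endomorphism of the standard Wall form
`W^g` is an automorphism. -/
theorem statement_8 {H : Type} [AddCommGroup H] [AddGroup.FG H]
    (P : FormParameter H) (g : ℕ) (f : WallHom (stdWall P g) (stdWall P g)) :
    ∃ e : WallIso (stdWall P g) (stdWall P g), e.toHom = f := by
  classical
  revert f
  dsimp only [stdWall]
  intro f
  set A : Matrix (Fin g) (Fin g) ℤ :=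
    Matrix.of fun i j => f.hom.neg (Pi.single j 1) i with hA
  set B : Matrix (Fin g) (Fin g) ℤ :=
    Matrix.of fun i j => (f.hom.pos (Pi.single j 1, 0)).1 i with hB
  have hsingle : ∀ x : Fin g → ℤ, x = ∑ j, (x j) • Pi.single j (1 : ℤ) := by
    intro x
    funext i
    rw [Finset.sum_apply]
    simp [Pi.single_apply]
  have hAmul : ∀ x : Fin g → ℤ, f.hom.neg x = A.mulVec x := by
    intro x
    conv_lhs => rw [hsingle x]
    rw [map_sum]
    funext i
    rw [Finset.sum_apply]
    simp only [map_zsmul]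
    simp only [Matrix.mulVec, dotProduct, hA, Matrix.of_apply]
    rw [Finset.sum_congr rfl fun j _ => mul_comm (f.hom.neg (Pi.single j 1) i) (x j)]
    exact Finset.sum_congr rfl fun j _ => rfl
  have hBmul : ∀ u : Fin g → ℤ, (f.hom.pos (u, (0 : Fin g → H))).1 = B.mulVec u := by
    intro u
    have hu : (u, (0 : Fin g → H)) = ∑ j, (u j) • ((Pi.single j (1 : ℤ) : Fin g → ℤ), (0 : Fin g → H)) := by
      refine Prod.ext ?_ ?_
      · rw [Prod.fst_sum]
        exact hsingle u
      · rw [Prod.snd_sum]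
        simp
    rw [hu, map_sum, Prod.fst_sum]
    funext i
    rw [Finset.sum_apply]
    simp only [map_zsmul]
    simp only [Matrix.mulVec, dotProduct, hB, Matrix.of_apply]
    rw [Finset.sum_congr rfl fun j _ => mul_comm ((f.hom.pos (Pi.single j 1, 0)).1 i) (u j)]
    exact Finset.sum_congr rfl fun j _ => rfl
  have hlam' : ∀ x u : Fin g → ℤ,
      (∑ i, (A.mulVec x) i * (B.mulVec u) i) = ∑ i, x i * u i := by
    intro x u
    have h := f.isWall.1 x (u, (0 : Fin g → H))
    rw [← hAmul, ← hBmul]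
    exact h
  have hTB : A.transpose * B = 1 := by
    ext i j
    have h := hlam' (Pi.single i 1) (Pi.single j 1)
    have hAv : A.mulVec (Pi.single i 1) = fun k => A k i := by
      funext k
      simp [Matrix.mulVec, dotProduct, Pi.single_apply]
    have hBv : B.mulVec (Pi.single j 1) = fun k => B k j := by
      funext k
      simp [Matrix.mulVec, dotProduct, Pi.single_apply]
    rw [hAv, hBv] at h
    rw [Matrix.mul_apply]
    simp only [Matrix.transpose_apply]
    rw [h]
    simp [Pi.single_apply, Matrix.one_apply, Finset.sum_ite_eq, eq_comm]
  have hBT : B * A.transpose = 1 := mul_eq_one_comm.mp hTB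
  have hABt : A * B.transpose = 1 := by
    have h := congrArg Matrix.transpose hBT
    simpa [Matrix.transpose_mul] using h
  have hBtA : B.transpose * A = 1 := by
    have h := congrArg Matrix.transpose hTB
    simpa [Matrix.transpose_mul] using h
  have hmv : ∀ (M N : Matrix (Fin g) (Fin g) ℤ), M * N = 1 →
      ∀ v : Fin g → ℤ, M.mulVec (N.mulVec v) = v := by
    intro M N h v
    rw [Matrix.mulVec_mulVec, h, Matrix.one_mulVec]
  have hneg_bij : Function.Bijective f.hom.neg := by
    constructor
    · intro x y hxy
      have h : A.mulVec x = A.mulVec y := by rw [← hAmul, ← hAmul, hxy]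
      calc x = B.transpose.mulVec (A.mulVec x) := (hmv _ _ hBtA x).symm
        _ = B.transpose.mulVec (A.mulVec y) := by rw [h]
        _ = y := hmv _ _ hBtA y
    · intro s
      exact ⟨B.transpose.mulVec s, by rw [hAmul]; exact hmv _ _ hABt s⟩
  have hv_sum : ∀ v : Fin g → H,
      ((0 : Fin g → ℤ), v) = ∑ j, (stdPair H g).tau (Pi.single j 1) (v j) := by
    intro v
    refine Prod.ext ?_ ?_
    · rw [Prod.fst_sum]
      simp [stdPair]
    · rw [Prod.snd_sum]
      funext i
      rw [Finset.sum_apply]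
      show v i = ∑ c, (((stdPair H g).tau (Pi.single c 1)) (v c)).2 i
      have hc : ∀ c, (((stdPair H g).tau (Pi.single c 1)) (v c)).2 i
          = (if i = c then v c else 0) := by
        intro c
        have htau : (((stdPair H g).tau (Pi.single c 1)) (v c)).2 i
            = (Pi.single c 1 : Fin g → ℤ) i • v c := rfl
        rw [htau, Pi.single_apply]
        split <;> simp
      rw [Finset.sum_congr rfl fun c _ => hc c]
      simp [Finset.sum_ite_eq]
  have hpos0 : ∀ v : Fin g → H, f.hom.pos (0, v) = (0, actH A v) := by
    intro v
    rw [hv_sum v, map_sum]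
    have hterm : ∀ j, f.hom.pos ((stdPair H g).tau (Pi.single j 1) (v j))
        = ((0 : Fin g → ℤ), fun i => (f.hom.neg (Pi.single j 1)) i • v j) := by
      intro j
      exact (f.hom.comm (Pi.single j 1) (v j)).trans rfl
    rw [Finset.sum_congr rfl fun j _ => hterm j]
    refine Prod.ext ?_ ?_
    · rw [Prod.fst_sum]
      simp
    · rw [Prod.snd_sum]
      funext i
      rw [Finset.sum_apply]
      rfl
  set psi : (Fin g → ℤ) → (Fin g → H) := fun u => (f.hom.pos (u, 0)).2 with hpsi
  have hdec : ∀ (u : Fin g → ℤ) (v : Fin g → H),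
      f.hom.pos (u, v) = (B.mulVec u, psi u + actH A v) := by
    intro u v
    have h : (u, v) = (u, (0 : Fin g → H)) + ((0 : Fin g → ℤ), v) := by simp
    rw [h, map_add, hpos0]
    refine Prod.ext ?_ ?_
    · show (f.hom.pos (u, 0)).1 + 0 = B.mulVec u
      rw [add_zero, hBmul]
    · rfl
  have hact1 : ∀ v : Fin g → H, actH B.transpose (actH A v) = v := fun v => by
    rw [actH_mul, hBtA, actH_one]
  have hact2 : ∀ v : Fin g → H, actH A (actH B.transpose v) = v := fun v => by
    rw [actH_mul, hABt, actH_one]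
  have hpos_bij : Function.Bijective f.hom.pos := by
    constructor
    · rintro ⟨u, v⟩ ⟨u', v'⟩ h
      rw [hdec, hdec] at h
      rw [Prod.ext_iff] at h
      obtain ⟨h1, h2⟩ := h
      dsimp only at h1 h2
      have hu : u = u' := by
        calc u = A.transpose.mulVec (B.mulVec u) := (hmv _ _ hTB u).symm
          _ = A.transpose.mulVec (B.mulVec u') := by rw [h1]
          _ = u' := hmv _ _ hTB u'
      subst hu
      have hv : actH A v = actH A v' := add_left_cancel h2
      have hvv : v = v' := by
        calc v = actH B.transpose (actH A v) := (hact1 v).symm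
          _ = actH B.transpose (actH A v') := by rw [hv]
          _ = v' := hact1 v'
      rw [hvv]
    · rintro ⟨s, t⟩
      refine ⟨(A.transpose.mulVec s, actH B.transpose (t - psi (A.transpose.mulVec s))), ?_⟩
      rw [hdec, hact2]
      refine Prod.ext ?_ ?_
      · exact hmv _ _ hBT s
      · show psi _ + (t - psi _) = t
        abel
  exact ⟨wallIsoOfBijective f hneg_bij hpos_bij, rfl⟩
end

section
/- Let k and g be positive integers and let f : W^k → W^{g+k} be a morphism of Wall forms. Then there is an isomorphism of Wall forms W^g ≅ f(W^k)^⊥, where f(W^k)^⊥ is the orthogonal complement in W^{g+k} of the image of f. -/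
set_option linter.unusedSectionVars false

section Proof9Aux

open Matrix

variable {H : Type} [AddCommGroup H]

def dotH {ι : Type} [Fintype ι] (x : ι → ℤ) (v : ι → H) : H := ∑ i, x i • v i

def mulVecH {ι κ : Type} [Fintype κ] (M : Matrix ι κ ℤ) (v : κ → H) : ι → H :=
  fun i => dotH (M i) v

variable {ι κ σ : Type} [Fintype ι] [Fintype κ] [Fintype σ]

theorem dotH_add_left (x y : ι → ℤ) (v : ι → H) :
    dotH (x + y) v = dotH x v + dotH y v := by
  simp [dotH, add_smul, Finset.sum_add_distrib]

theorem dotH_add_right (x : ι → ℤ) (v w : ι → H) :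
    dotH x (v + w) = dotH x v + dotH x w := by
  simp [dotH, smul_add, Finset.sum_add_distrib]

theorem dotH_smul_right (x : ι → ℤ) (z : ℤ) (v : ι → H) :
    dotH x (z • v) = z • dotH x v := by
  simp only [dotH, Finset.smul_sum, Pi.smul_apply]
  exact Finset.sum_congr rfl fun i _ => smul_comm (x i) z (v i)

theorem dotH_zero_left (v : ι → H) : dotH (0 : ι → ℤ) v = 0 := by simp [dotH]

theorem dotH_zero_right (x : ι → ℤ) : dotH x (0 : ι → H) = 0 := by simp [dotH]

theorem dotH_single [DecidableEq ι] (i : ι) (v : ι → H) :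
    dotH (Pi.single i 1) v = v i := by
  simp [dotH, Pi.single_apply, ite_smul]

theorem dotH_sum_smul {κ' : Type} [Fintype κ'] (v : ι → ℤ) (b : κ' → ℤ) (w : κ' → ι → H) :
    dotH v (∑ x, b x • w x) = ∑ x, b x • dotH v (w x) := by
  simp only [dotH]
  have h1 : ∀ i, v i • (∑ x, b x • w x) i = ∑ x, v i • b x • w x i := by
    intro i
    rw [Finset.sum_apply, Finset.smul_sum]
    exact Finset.sum_congr rfl fun x _ => by rw [Pi.smul_apply]
  rw [Finset.sum_congr rfl fun i _ => h1 i, Finset.sum_comm]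
  exact Finset.sum_congr rfl fun x _ => by
    rw [Finset.smul_sum]
    exact Finset.sum_congr rfl fun i _ => smul_comm _ _ _

theorem mulVec_eq_sum (M : Matrix ι κ ℤ) (x : κ → ℤ) (i : ι) :
    M.mulVec x i = ∑ j, M i j * x j := by
  simp [Matrix.mulVec, dotProduct]

theorem dotH_mulVec (M : Matrix ι κ ℤ) (x : κ → ℤ) (v : ι → H) :
    dotH (M.mulVec x) v = dotH x (mulVecH Mᵀ v) := by
  simp only [dotH, mulVecH]
  have h1 : ∀ i, M.mulVec x i • v i = ∑ j, x j • M i j • v i := by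
    intro i
    rw [_root_.mulVec_eq_sum, Finset.sum_smul]
    exact Finset.sum_congr rfl fun j _ => by rw [mul_comm, mul_smul]
  rw [Finset.sum_congr rfl fun i _ => h1 i, Finset.sum_comm]
  refine Finset.sum_congr rfl fun j _ => ?_
  rw [← Finset.smul_sum]
  simp only [transpose_apply]

theorem dotH_mulVecH (M : Matrix ι κ ℤ) (x : ι → ℤ) (v : κ → H) :
    dotH x (mulVecH M v) = dotH (Mᵀ.mulVec x) v := by
  rw [dotH_mulVec Mᵀ x v, transpose_transpose]

theorem mulVecH_mul (M : Matrix ι κ ℤ) (N : Matrix κ σ ℤ) (v : σ → H) :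
    mulVecH (M * N) v = mulVecH M (mulVecH N v) := by
  funext i
  simp only [mulVecH, dotH]
  have h1 : ∀ s, (M * N) i s • v s = ∑ j, M i j • N j s • v s := by
    intro s
    rw [Matrix.mul_apply, Finset.sum_smul]
    exact Finset.sum_congr rfl fun j _ => mul_smul _ _ _
  rw [Finset.sum_congr rfl fun s _ => h1 s, Finset.sum_comm]
  exact Finset.sum_congr rfl fun j _ => by rw [← Finset.smul_sum]

theorem mulVecH_one [DecidableEq ι] (v : ι → H) : mulVecH (1 : Matrix ι ι ℤ) v = v := by
  funext i
  simp [mulVecH, dotH, Matrix.one_apply, ite_smul]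

theorem mulVecH_zero_matrix (v : κ → H) : mulVecH (0 : Matrix ι κ ℤ) v = 0 := by
  funext i; simp [mulVecH, dotH]

theorem mulVecH_add_right (M : Matrix ι κ ℤ) (v w : κ → H) :
    mulVecH M (v + w) = mulVecH M v + mulVecH M w := by
  funext i; exact dotH_add_right _ _ _

theorem mulVecH_smul_right (M : Matrix ι κ ℤ) (z : ℤ) (v : κ → H) :
    mulVecH M (z • v) = z • mulVecH M v := by
  funext i; exact dotH_smul_right _ _ _

theorem mulVecH_sub_matrix (M N : Matrix ι κ ℤ) (v : κ → H) :
    mulVecH (M - N) v = mulVecH M v - mulVecH N v := by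
  funext i
  simp [mulVecH, dotH, sub_smul, Finset.sum_sub_distrib]

theorem mulVecH_pi_smul (M : Matrix ι κ ℤ) (x : κ → ℤ) (h : H) :
    mulVecH M (fun j => x j • h) = fun i => M.mulVec x i • h := by
  funext i
  simp only [mulVecH, dotH, _root_.mulVec_eq_sum, Finset.sum_smul]
  exact Finset.sum_congr rfl fun j _ => by rw [mul_smul]

theorem dotInt_mulVec (M : Matrix ι κ ℤ) (x : κ → ℤ) (y : ι → ℤ) :
    ∑ i, M.mulVec x i * y i = ∑ j, x j * Mᵀ.mulVec y j := by
  simp only [_root_.mulVec_eq_sum, Finset.sum_mul, Finset.mul_sum, transpose_apply]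
  rw [Finset.sum_comm]
  exact Finset.sum_congr rfl fun j _ => Finset.sum_congr rfl fun i _ => by ring

end Proof9Aux


open Matrix

theorem matrix_ext_mulVec {a b : ℕ} (M N : Matrix (Fin a) (Fin b) ℤ)
    (h : ∀ v, M.mulVec v = N.mulVec v) : M = N := by
  ext i j
  have h2 := congrFun (h (Pi.single j 1)) i
  simpa [Matrix.mulVec_single] using h2

theorem exists_compl {k g : ℕ}
    (A B : Matrix (Fin (g + k)) (Fin k) ℤ) (hAB : Aᵀ * B = 1) :
    ∃ C D : Matrix (Fin (g + k)) (Fin g) ℤ,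
      Aᵀ * C = 0 ∧ Dᵀ * B = 0 ∧ Dᵀ * C = 1 ∧ B * Aᵀ + C * Dᵀ = 1 := by
  classical
  set T : ((Fin (g+k)) → ℤ) →ₗ[ℤ] (Fin k → ℤ) := Matrix.mulVecLin Aᵀ with hT
  have hTapp : ∀ v, T v = Aᵀ.mulVec v := fun v => rfl
  have hsurj : Function.Surjective T := by
    intro x
    refine ⟨B.mulVec x, ?_⟩
    rw [hTapp, Matrix.mulVec_mulVec, hAB, Matrix.one_mulVec]
  obtain ⟨m, bK⟩ := Submodule.basisOfPid (Pi.basisFun ℤ (Fin (g+k))) (LinearMap.ker T)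
  set K := LinearMap.ker T
  have hm : m = g := by
    have h1 := LinearMap.rank_range_add_rank_ker T
    rw [LinearMap.range_eq_top.mpr hsurj] at h1
    have h2 : Module.rank ℤ (⊤ : Submodule ℤ (Fin k → ℤ)) = (k : Cardinal) := by
      rw [rank_top, rank_fin_fun]
    rw [h2, rank_fin_fun, rank_eq_card_basis bK, Fintype.card_fin] at h1
    have h3 : ((k + m : ℕ) : Cardinal) = ((g + k : ℕ) : Cardinal) := by push_cast; push_cast at h1; exact h1
    have h4 := Nat.cast_injective (R := Cardinal) h3
    omega
  let bG : Module.Basis (Fin g) ℤ (LinearMap.ker T) := bK.reindex (finCongr hm)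
  set C : Matrix (Fin (g+k)) (Fin g) ℤ := fun j i => (bG i : Fin (g+k) → ℤ) j with hCdef
  have hCcoe : ∀ u : Fin g → ℤ, C.mulVec u = ((bG.equivFun.symm u : K) : Fin (g+k) → ℤ) := by
    intro u
    funext j
    rw [Module.Basis.equivFun_symm_apply]
    have : ((∑ i, u i • bG i : K) : Fin (g+k) → ℤ) j
        = ∑ i, u i • ((bG i : Fin (g+k) → ℤ) j) := by
      rw [Submodule.coe_sum]
      rw [Finset.sum_apply]
      rfl
    rw [this]
    simp [Matrix.mulVec, dotProduct, hCdef, mul_comm, smul_eq_mul]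
  have hAC : Aᵀ * C = 0 := by
    apply matrix_ext_mulVec
    intro v
    rw [← Matrix.mulVec_mulVec, hCcoe, Matrix.zero_mulVec, ← hTapp]
    exact (bG.equivFun.symm v).2
  -- the projection onto K along the image of B
  set pr : ((Fin (g+k)) → ℤ) →ₗ[ℤ] ((Fin (g+k)) → ℤ) :=
    LinearMap.id - (Matrix.mulVecLin B).comp (Matrix.mulVecLin Aᵀ) with hprdef
  have hprapp : ∀ v, pr v = v - B.mulVec (Aᵀ.mulVec v) := fun v => rfl
  have hpr : ∀ v, pr v ∈ K := by
    intro v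
    have : T (pr v) = 0 := by
      rw [hprapp, map_sub, hTapp, hTapp, Matrix.mulVec_mulVec, Matrix.mulVec_mulVec,
        ← Matrix.mulVec_mulVec (M := Aᵀ * B), hAB, Matrix.one_mulVec, sub_self]
    exact this
  set q : ((Fin (g+k)) → ℤ) →ₗ[ℤ] K := LinearMap.codRestrict K pr hpr with hqdef
  set dlin : ((Fin (g+k)) → ℤ) →ₗ[ℤ] (Fin g → ℤ) :=
    (bG.equivFun.toLinearMap).comp q with hdlin
  set D : Matrix (Fin (g+k)) (Fin g) ℤ := (LinearMap.toMatrix' dlin)ᵀ with hDdef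
  have hD : ∀ v, Dᵀ.mulVec v = dlin v := by
    intro v
    rw [hDdef, transpose_transpose, ← Matrix.toLin'_apply, Matrix.toLin'_toMatrix']
  have hq : ∀ v, ((q v : K) : Fin (g+k) → ℤ) = pr v := fun v => rfl
  have hDC : Dᵀ * C = 1 := by
    apply matrix_ext_mulVec
    intro v
    rw [← Matrix.mulVec_mulVec, hD, Matrix.one_mulVec]
    have h1 : q (C.mulVec v) = bG.equivFun.symm v := by
      apply Subtype.ext
      rw [hq, hprapp, hCcoe]
      have : Aᵀ.mulVec ((bG.equivFun.symm v : K) : Fin (g+k) → ℤ) = 0 := by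
        rw [← hTapp]; exact (bG.equivFun.symm v).2
      rw [this, Matrix.mulVec_zero, sub_zero]
    show bG.equivFun (q (C.mulVec v)) = v
    rw [h1, LinearEquiv.apply_symm_apply]
  have hDB : Dᵀ * B = 0 := by
    apply matrix_ext_mulVec
    intro v
    rw [← Matrix.mulVec_mulVec, hD, Matrix.zero_mulVec]
    have h1 : q (B.mulVec v) = 0 := by
      apply Subtype.ext
      rw [hq, hprapp]
      have h2 : Aᵀ *ᵥ (B *ᵥ v) = v := by
        rw [Matrix.mulVec_mulVec, hAB, Matrix.one_mulVec]
      rw [h2, sub_self]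
      rfl
    show bG.equivFun (q (B.mulVec v)) = 0
    rw [h1, map_zero]
  have hBACD : B * Aᵀ + C * Dᵀ = 1 := by
    apply matrix_ext_mulVec
    intro v
    rw [Matrix.add_mulVec, Matrix.one_mulVec, ← Matrix.mulVec_mulVec, ← Matrix.mulVec_mulVec,
      hD]
    have h1 : C.mulVec (dlin v) = ((q v : K) : Fin (g+k) → ℤ) := by
      rw [hCcoe]
      congr 1
      show bG.equivFun.symm (bG.equivFun (q v)) = q v
      exact bG.equivFun.symm_apply_apply (q v)
    rw [h1, hq, hprapp]
    abel
  exact ⟨C, D, hAC, hDB, hDC, hBACD⟩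


section Proof9Main

open Matrix

variable {H : Type} [AddCommGroup H] [AddGroup.FG H] {P : FormParameter H} {k g : ℕ}

/-- The matrix of `f₋` on the standard Wall forms. -/
def pA (f : WallHom (stdWall P k) (stdWall P (g + k))) :
    Matrix (Fin (g + k)) (Fin k) ℤ :=
  fun j i => f.hom.neg (Pi.single i 1) j

/-- The matrix of the `ℤ`-part of `f₊` on the standard Wall forms. -/
def pB (f : WallHom (stdWall P k) (stdWall P (g + k))) :
    Matrix (Fin (g + k)) (Fin k) ℤ :=
  fun j i => (f.hom.pos ((Pi.single i 1, 0) : (Fin k → ℤ) × (Fin k → H))).1 j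

/-- The pairing of a vector with the `H`-part of `f₊` on the generators. -/
def pPsiT (f : WallHom (stdWall P k) (stdWall P (g + k)))
    (v : Fin (g + k) → ℤ) : Fin k → H :=
  fun i => dotH v ((f.hom.pos ((Pi.single i 1, 0) : (Fin k → ℤ) × (Fin k → H))).2)

theorem sum_single {ι : Type} [Fintype ι] [DecidableEq ι] (x : ι → ℤ) :
    ∑ i, x i • (Pi.single i 1 : ι → ℤ) = x := by
  have h1 : ∀ i, x i • (Pi.single i 1 : ι → ℤ) = Pi.single i (x i) := by
    intro i
    rw [← Pi.single_smul, smul_eq_mul, mul_one]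
  rw [Finset.sum_congr rfl fun i _ => h1 i, Finset.univ_sum_single]

theorem hneg (f : WallHom (stdWall P k) (stdWall P (g + k))) (x : Fin k → ℤ) :
    f.hom.neg x = (pA f).mulVec x := by
  have h1 : f.hom.neg x = ∑ i, x i • f.hom.neg (Pi.single i 1) := by
    conv_lhs => rw [← sum_single x]
    erw [map_sum]
    exact Finset.sum_congr rfl fun i _ => map_zsmul f.hom.neg _ _
  rw [h1]
  funext j
  erw [Finset.sum_apply, _root_.mulVec_eq_sum]
  refine Finset.sum_congr rfl fun i _ => ?_
  show x i • f.hom.neg (Pi.single i 1) j = pA f j i * x i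
  rw [smul_eq_mul, mul_comm]
  rfl

theorem hpos_zero (f : WallHom (stdWall P k) (stdWall P (g + k))) (t : Fin k → H) :
    f.hom.pos ((0, t) : (Fin k → ℤ) × (Fin k → H)) = (0, mulVecH (pA f) t) := by
  have hdec : ((0, t) : (Fin k → ℤ) × (Fin k → H))
      = ∑ i, (stdWall P k).carrier.tau (Pi.single i 1) (t i) := by
    have h1 : ∀ i, (stdWall P k).carrier.tau (Pi.single i 1) (t i)
        = ((0, fun j => (Pi.single i 1 : Fin k → ℤ) j • t i) : (Fin k → ℤ) × (Fin k → H)) := by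
      intro i; rfl
    rw [Finset.sum_congr rfl fun i _ => h1 i]
    erw [Prod.ext_iff]
    constructor
    · show (0 : Fin k → ℤ) = (∑ i, ((0 : Fin k → ℤ), fun j => (Pi.single i 1 : Fin k → ℤ) j • t i)).1
      rw [Prod.fst_sum]
      simp
    · show t = (∑ i, ((0 : Fin k → ℤ), fun j => (Pi.single i 1 : Fin k → ℤ) j • t i)).2
      rw [Prod.snd_sum]
      funext j
      rw [Finset.sum_apply]
      have h2 : ∀ i, (fun j => (Pi.single i 1 : Fin k → ℤ) j • t i) j
          = (Pi.single i (t i) : Fin k → H) j := by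
        intro i
        by_cases h : j = i
        · subst h; simp
        · simp [Pi.single_apply, h]
      rw [Finset.sum_congr rfl fun i _ => h2 i]
      rw [show ∑ i, (Pi.single i (t i) : Fin k → H) j = (∑ i, (Pi.single i (t i) : Fin k → H)) j
        from (Finset.sum_apply _ _ _).symm, Finset.univ_sum_single]
  rw [hdec, map_sum]
  have h3 : ∀ i, f.hom.pos ((stdWall P k).carrier.tau (Pi.single i 1) (t i))
      = ((0 : Fin (g+k) → ℤ), fun j => pA f j i • t i) := by
    intro i
    erw [f.hom.comm]
    show ((0 : Fin (g+k) → ℤ), fun j => f.hom.neg (Pi.single i 1) j • t i) = _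
    rfl
  rw [Finset.sum_congr rfl fun i _ => h3 i]
  erw [Prod.ext_iff]
  constructor
  · show (∑ i, (((0 : Fin (g+k) → ℤ), fun j => pA f j i • t i) :
        (Fin (g+k) → ℤ) × (Fin (g+k) → H))).1 = (0 : Fin (g+k) → ℤ)
    rw [Prod.fst_sum]
    simp
  · show (∑ i, (((0 : Fin (g+k) → ℤ), fun j => pA f j i • t i) :
        (Fin (g+k) → ℤ) × (Fin (g+k) → H))).2 = mulVecH (pA f) t
    rw [Prod.snd_sum]
    funext j
    rw [Finset.sum_apply]
    rfl

theorem hpos_snd_zero (f : WallHom (stdWall P k) (stdWall P (g + k))) (b : Fin k → ℤ) :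
    (f.hom.pos ((b, 0) : (Fin k → ℤ) × (Fin k → H))).1 = (pB f).mulVec b := by
  have h1 : ((b, 0) : (Fin k → ℤ) × (Fin k → H))
      = ∑ i, b i • ((Pi.single i 1, 0) : (Fin k → ℤ) × (Fin k → H)) := by
    rw [Prod.ext_iff]
    constructor
    · show b = (∑ i, b i • ((Pi.single i 1, 0) : (Fin k → ℤ) × (Fin k → H))).1
      rw [Prod.fst_sum]
      exact (sum_single b).symm
    · show (0 : Fin k → H) = (∑ i, b i • ((Pi.single i 1, 0) : (Fin k → ℤ) × (Fin k → H))).2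
      rw [Prod.snd_sum]
      simp
  erw [h1, map_sum]
  erw [Prod.fst_sum]
  funext j
  rw [Finset.sum_apply, _root_.mulVec_eq_sum]
  refine Finset.sum_congr rfl fun i _ => ?_
  erw [map_zsmul]
  show b i • (f.hom.pos ((Pi.single i 1, 0) : (Fin k → ℤ) × (Fin k → H))).1 j = pB f j i * b i
  rw [smul_eq_mul, mul_comm]
  rfl

theorem hpos (f : WallHom (stdWall P k) (stdWall P (g + k)))
    (y : (Fin k → ℤ) × (Fin k → H)) :
    f.hom.pos y = ((pB f).mulVec y.1,
      (f.hom.pos ((y.1, 0) : (Fin k → ℤ) × (Fin k → H))).2 + mulVecH (pA f) y.2) := by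
  have h1 : y = ((y.1, 0) : (Fin k → ℤ) × (Fin k → H)) + (0, y.2) := by
    rw [Prod.ext_iff]
    constructor
    · show y.1 = y.1 + 0
      rw [add_zero]
    · show y.2 = 0 + y.2
      rw [zero_add]
  conv_lhs => rw [h1]
  erw [map_add, hpos_zero]
  erw [Prod.ext_iff]
  constructor
  · show (f.hom.pos ((y.1, 0) : (Fin k → ℤ) × (Fin k → H))).1 + 0 = (pB f).mulVec y.1
    rw [add_zero, hpos_snd_zero]
  · rfl

theorem hdotPsi (f : WallHom (stdWall P k) (stdWall P (g + k)))
    (v : Fin (g + k) → ℤ) (b : Fin k → ℤ) :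
    dotH v ((f.hom.pos ((b, 0) : (Fin k → ℤ) × (Fin k → H))).2) = dotH b (pPsiT f v) := by
  have h1 : ((b, 0) : (Fin k → ℤ) × (Fin k → H))
      = ∑ i, b i • ((Pi.single i 1, 0) : (Fin k → ℤ) × (Fin k → H)) := by
    rw [Prod.ext_iff]
    constructor
    · show b = (∑ i, b i • ((Pi.single i 1, 0) : (Fin k → ℤ) × (Fin k → H))).1
      rw [Prod.fst_sum]; exact (sum_single b).symm
    · show (0 : Fin k → H) = (∑ i, b i • ((Pi.single i 1, 0) : (Fin k → ℤ) × (Fin k → H))).2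
      rw [Prod.snd_sum]; simp
  erw [h1, map_sum]
  have h2 : (∑ i, f.hom.pos (b i • ((Pi.single i 1, 0) : (Fin k → ℤ) × (Fin k → H)))).2
      = ∑ i, b i • (f.hom.pos ((Pi.single i 1, 0) : (Fin k → ℤ) × (Fin k → H))).2 := by
    erw [Prod.snd_sum]
    exact Finset.sum_congr rfl fun i _ => by erw [map_zsmul]; rfl
  rw [h2, dotH_sum_smul]
  rfl

theorem hAB (f : WallHom (stdWall P k) (stdWall P (g + k))) :
    (pA f)ᵀ * (pB f) = 1 := by
  ext i i'
  have h1 := f.isWall.1 (Pi.single i 1)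
    ((Pi.single i' 1, 0) : (Fin k → ℤ) × (Fin k → H))
  have h2 : (stdWall P (g+k)).str.lam (f.hom.neg (Pi.single i 1))
      (f.hom.pos ((Pi.single i' 1, 0) : (Fin k → ℤ) × (Fin k → H)))
      = ∑ j, pA f j i * pB f j i' := by
    show ∑ j, f.hom.neg (Pi.single i 1) j
        * (f.hom.pos ((Pi.single i' 1, 0) : (Fin k → ℤ) × (Fin k → H))).1 j = _
    rfl
  have h3 : (stdWall P k).str.lam (Pi.single i 1)
      ((Pi.single i' 1, 0) : (Fin k → ℤ) × (Fin k → H))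
      = if i = i' then 1 else 0 := by
    show ∑ l, (Pi.single i 1 : Fin k → ℤ) l * (Pi.single i' 1 : Fin k → ℤ) l = _
    simp only [Pi.single_apply, ite_mul, one_mul, zero_mul]
    by_cases h : i = i'
    · subst h
      simp
    · rw [if_neg h]
      apply Finset.sum_eq_zero
      intro l _
      by_cases hl : l = i
      · rw [if_pos hl, if_neg (by rw [hl]; exact h)]
      · rw [if_neg hl]
  rw [h2, h3] at h1
  rw [Matrix.mul_apply, Matrix.one_apply]
  simp only [transpose_apply]
  exact h1

theorem memNeg (f : WallHom (stdWall P k) (stdWall P (g + k)))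
    (v : Fin (g + k) → ℤ) :
    v ∈ (f.hom.rangeSub.perp (stdWall P (g + k)).str).neg ↔ (pB f)ᵀ.mulVec v = 0 := by
  constructor
  · intro hv
    have hv' : ∀ w ∈ f.hom.pos.range, (stdWall P (g + k)).str.lam v w = 0 := hv
    funext i
    have h1 := hv' (f.hom.pos ((Pi.single i 1, 0) : (Fin k → ℤ) × (Fin k → H)))
      ⟨(Pi.single i 1, 0), rfl⟩
    have h2 : (stdWall P (g + k)).str.lam v
        (f.hom.pos ((Pi.single i 1, 0) : (Fin k → ℤ) × (Fin k → H)))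
        = (pB f)ᵀ.mulVec v i := by
      show ∑ j, v j * (f.hom.pos ((Pi.single i 1, 0) : (Fin k → ℤ) × (Fin k → H))).1 j = _
      rw [_root_.mulVec_eq_sum]
      exact Finset.sum_congr rfl fun j _ => by rw [transpose_apply]; exact mul_comm _ _
    rw [h2] at h1
    rw [h1]
    rfl
  · intro hv
    show ∀ w ∈ f.hom.pos.range, (stdWall P (g + k)).str.lam v w = 0
    rintro w ⟨y, rfl⟩
    show ∑ j, v j * (f.hom.pos y).1 j = 0
    have h1 : ∀ j, (f.hom.pos y).1 j = (pB f).mulVec y.1 j := by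
      intro j; rw [hpos f y]
    rw [Finset.sum_congr rfl fun j _ => by rw [h1 j, mul_comm]]
    rw [dotInt_mulVec, hv]
    simp

theorem memPos (f : WallHom (stdWall P k) (stdWall P (g + k)))
    (y : (Fin (g + k) → ℤ) × (Fin (g + k) → H)) :
    y ∈ (f.hom.rangeSub.perp (stdWall P (g + k)).str).pos ↔
      ((pA f)ᵀ.mulVec y.1 = 0 ∧ mulVecH (pB f)ᵀ y.2 = (-P.eps) • pPsiT f y.1) := by
  have hmu : ∀ w : (Fin (g + k) → ℤ) × (Fin (g + k) → H),
      (stdWall P (g + k)).str.mu y w = dotH w.1 y.2 + P.eps • dotH y.1 w.2 := fun w => rfl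
  constructor
  · intro hy
    obtain ⟨hy1, hy2⟩ : (∀ v ∈ f.hom.neg.range, (stdWall P (g + k)).str.lam v y = 0) ∧
        (∀ w ∈ f.hom.pos.range, (stdWall P (g + k)).str.mu y w = 0) := hy
    constructor
    · funext i
      have h1 := hy1 (f.hom.neg (Pi.single i 1)) ⟨Pi.single i 1, rfl⟩
      have h2 : (stdWall P (g + k)).str.lam (f.hom.neg (Pi.single i 1)) y
          = (pA f)ᵀ.mulVec y.1 i := by
        show ∑ j, f.hom.neg (Pi.single i 1) j * y.1 j = _
        rw [_root_.mulVec_eq_sum]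
        exact Finset.sum_congr rfl fun j _ => by rw [transpose_apply]; rfl
      rw [h2] at h1
      rw [h1]; rfl
    · funext i
      have h1 := hy2 (f.hom.pos ((Pi.single i 1, 0) : (Fin k → ℤ) × (Fin k → H)))
        ⟨(Pi.single i 1, 0), rfl⟩
      erw [hmu] at h1
      have h3 : (f.hom.pos ((Pi.single i 1, 0) : (Fin k → ℤ) × (Fin k → H))).1
          = (pB f).mulVec (Pi.single i 1) := hpos_snd_zero f _
      rw [h3] at h1
      have h4 : dotH ((pB f).mulVec (Pi.single i 1)) y.2 = mulVecH (pB f)ᵀ y.2 i := by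
        rw [dotH_mulVec, dotH_single]
      have h5 : dotH y.1 ((f.hom.pos ((Pi.single i 1, 0) : (Fin k → ℤ) × (Fin k → H))).2)
          = pPsiT f y.1 i := by
        rw [hdotPsi, dotH_single]
      rw [h4, h5] at h1
      have h6 : mulVecH (pB f)ᵀ y.2 i = -(P.eps • pPsiT f y.1 i) := by
        rw [eq_neg_of_add_eq_zero_left h1]
      rw [h6]
      simp [neg_smul]
  · rintro ⟨h1, h2⟩
    constructor
    · rintro v ⟨x, rfl⟩
      show ∑ j, f.hom.neg x j * y.1 j = 0
      rw [Finset.sum_congr rfl fun j _ => by rw [hneg f x]]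
      erw [dotInt_mulVec, h1]
      simp
    · rintro w ⟨z, rfl⟩
      erw [hmu, hpos f z]
      show dotH ((pB f).mulVec z.1) y.2
          + P.eps • dotH y.1 ((f.hom.pos ((z.1, 0) : (Fin k → ℤ) × (Fin k → H))).2
            + mulVecH (pA f) z.2) = 0
      rw [dotH_mulVec, h2, dotH_smul_right, dotH_add_right, hdotPsi,
        dotH_mulVecH, h1, dotH_zero_left, add_zero, neg_smul, neg_add_cancel]

theorem statement_9' {H : Type} [AddCommGroup H] [AddGroup.FG H]
    (P : FormParameter H) (k g : ℕ)
    (f : WallHom (stdWall P k) (stdWall P (g + k))) :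
    Nonempty (WallIso (stdWall P g)
      (f.hom.rangeSub.perp (stdWall P (g + k)).str).toWall) := by
  classical
  obtain ⟨C, D, hAC, hDB, hDC, hBACD⟩ := exists_compl (pA f) (pB f) (hAB f)
  set A := pA f with hA
  set B := pB f with hB
  have trans_eq : ∀ {a b c : ℕ} (M : Matrix (Fin a) (Fin b) ℤ) (N : Matrix (Fin a) (Fin c) ℤ)
      (Q : Matrix (Fin b) (Fin c) ℤ), Mᵀ * N = Q → Nᵀ * M = Qᵀ := by
    intro a b c M N Q h
    have := congrArg Matrix.transpose h
    rwa [Matrix.transpose_mul, Matrix.transpose_transpose] at this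
  have hBA : Bᵀ * A = 1 := by
    have := trans_eq A B 1 (by rw [hAB f])
    rwa [Matrix.transpose_one] at this
  have hCA : Cᵀ * A = 0 := by
    have := trans_eq A C 0 hAC
    rwa [Matrix.transpose_zero] at this
  have hCD : Cᵀ * D = 1 := by
    have := trans_eq D C 1 hDC
    rwa [Matrix.transpose_one] at this
  have hBD : Bᵀ * D = 0 := by
    have := trans_eq D B 0 hDB
    rwa [Matrix.transpose_zero] at this
  have hABDC : A * Bᵀ + D * Cᵀ = 1 := by
    have := congrArg Matrix.transpose hBACD
    rwa [Matrix.transpose_add, Matrix.transpose_mul, Matrix.transpose_mul,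
      Matrix.transpose_transpose, Matrix.transpose_transpose, Matrix.transpose_one] at this
  set θ : (Fin g → ℤ) → (Fin (g + k) → H) :=
    fun b => (-P.eps) • mulVecH A (pPsiT f (C.mulVec b)) with hθ
  -- repeatedly used facts
  have hCDone : C * Dᵀ = 1 - B * Aᵀ := eq_sub_of_add_eq' hBACD
  have hDCone : D * Cᵀ = 1 - A * Bᵀ := eq_sub_of_add_eq' hABDC
  have hpsiT_add : ∀ v v' : Fin (g + k) → ℤ, pPsiT f (v + v') = pPsiT f v + pPsiT f v' := by
    intro v v'
    funext i
    exact dotH_add_left _ _ _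
  have hpsiT_zero : pPsiT f 0 = 0 := by
    funext i
    exact dotH_zero_left _
  have hθadd : ∀ b b', θ (b + b') = θ b + θ b' := by
    intro b b'
    rw [hθ]
    simp only
    rw [Matrix.mulVec_add, hpsiT_add, mulVecH_add_right, smul_add]
  have hθzero : θ 0 = 0 := by
    rw [hθ]
    simp only
    rw [Matrix.mulVec_zero, hpsiT_zero]
    have : mulVecH A (0 : Fin k → H) = 0 := by
      funext i
      exact dotH_zero_right _
    rw [this, smul_zero]
  have hθB : ∀ b, mulVecH Bᵀ (θ b) = (-P.eps) • pPsiT f (C.mulVec b) := by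
    intro b
    rw [hθ]
    simp only
    rw [mulVecH_smul_right, ← mulVecH_mul, hBA, mulVecH_one]
  have hdotCA : ∀ (v : Fin g → ℤ) (z : Fin k → H), dotH (C.mulVec v) (mulVecH A z) = 0 := by
    intro v z
    rw [dotH_mulVecH, Matrix.mulVec_mulVec, hAC, Matrix.zero_mulVec, dotH_zero_left]
  have hdotCθ : ∀ (v b : Fin g → ℤ), dotH (C.mulVec v) (θ b) = 0 := by
    intro v b
    rw [hθ]
    simp only
    rw [dotH_smul_right, hdotCA, smul_zero]
  have hdotCD : ∀ (v : Fin g → ℤ) (t : Fin g → H), dotH (C.mulVec v) (mulVecH D t) = dotH v t := by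
    intro v t
    rw [dotH_mulVecH, Matrix.mulVec_mulVec, hDC, Matrix.one_mulVec]
  have hdotA : ∀ (c : Fin (g + k) → ℤ), Aᵀ.mulVec c = 0 →
      ∀ z : Fin k → H, dotH c (mulVecH A z) = 0 := by
    intro c hc z
    rw [dotH_mulVecH, hc, dotH_zero_left]
  have hCDv : ∀ c : Fin (g + k) → ℤ, Aᵀ.mulVec c = 0 → (C * Dᵀ).mulVec c = c := by
    intro c hc
    rw [hCDone, Matrix.sub_mulVec, Matrix.one_mulVec, ← Matrix.mulVec_mulVec, hc,
      Matrix.mulVec_zero, sub_zero]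
  have hDCs : ∀ (c : Fin (g + k) → ℤ) (s : Fin (g + k) → H), Aᵀ.mulVec c = 0 →
      mulVecH Bᵀ s = (-P.eps) • pPsiT f c →
      mulVecH (D * Cᵀ) s = s + P.eps • mulVecH A (pPsiT f c) := by
    intro c s hc hs
    rw [hDCone, mulVecH_sub_matrix, mulVecH_one, mulVecH_mul, hs, mulVecH_smul_right,
      neg_smul, sub_neg_eq_add]
  have hkey : ∀ (c : Fin (g + k) → ℤ) (s : Fin (g + k) → H) (c' : Fin (g + k) → ℤ),
      Aᵀ.mulVec c = 0 → mulVecH Bᵀ s = (-P.eps) • pPsiT f c → Aᵀ.mulVec c' = 0 →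
      dotH (Dᵀ.mulVec c') (mulVecH Cᵀ s) = dotH c' s := by
    intro c s c' hc hs hc'
    rw [dotH_mulVec, Matrix.transpose_transpose, ← mulVecH_mul, hDCs c s hc hs,
      dotH_add_right, dotH_smul_right, hdotA c' hc', smul_zero, add_zero]
  -- membership facts
  have hφnegmem : ∀ x : Fin g → ℤ,
      D.mulVec x ∈ (f.hom.rangeSub.perp (stdWall P (g + k)).str).neg := by
    intro x
    rw [memNeg]
    rw [Matrix.mulVec_mulVec, hBD, Matrix.zero_mulVec]
  have hφposmem : ∀ (b : Fin g → ℤ) (t : Fin g → H),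
      ((C.mulVec b, θ b + mulVecH D t) : (Fin (g + k) → ℤ) × (Fin (g + k) → H))
        ∈ (f.hom.rangeSub.perp (stdWall P (g + k)).str).pos := by
    intro b t
    rw [memPos]
    constructor
    · show Aᵀ.mulVec (C.mulVec b) = 0
      rw [Matrix.mulVec_mulVec, hAC, Matrix.zero_mulVec]
    · show mulVecH Bᵀ (θ b + mulVecH D t) = (-P.eps) • pPsiT f (C.mulVec b)
      rw [mulVecH_add_right, hθB, ← mulVecH_mul, hBD, mulVecH_zero_matrix, add_zero]
  -- the four structure maps
  let φn : (Fin g → ℤ) →+ ↥((f.hom.rangeSub.perp (stdWall P (g + k)).str).neg) :=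
    AddMonoidHom.mk' (fun x => ⟨D.mulVec x, hφnegmem x⟩)
      (fun x y => by
        apply Subtype.ext
        show D.mulVec (x + y) = D.mulVec x + D.mulVec y
        rw [Matrix.mulVec_add])
  let φp : ((Fin g → ℤ) × (Fin g → H)) →+ ↥((f.hom.rangeSub.perp (stdWall P (g + k)).str).pos) :=
    AddMonoidHom.mk' (fun y => ⟨(C.mulVec y.1, θ y.1 + mulVecH D y.2), hφposmem y.1 y.2⟩)
      (fun y y' => by
        apply Subtype.ext
        refine Prod.ext ?_ ?_
        · show C.mulVec (y.1 + y'.1) = C.mulVec y.1 + C.mulVec y'.1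
          rw [Matrix.mulVec_add]
        · show θ (y.1 + y'.1) + mulVecH D (y.2 + y'.2) = _
          rw [hθadd, mulVecH_add_right]
          show _ = (θ y.1 + mulVecH D y.2) + (θ y'.1 + mulVecH D y'.2)
          abel)
  let ρn : ↥((f.hom.rangeSub.perp (stdWall P (g + k)).str).neg) →+ (Fin g → ℤ) :=
    AddMonoidHom.mk' (fun v => Cᵀ.mulVec v.val)
      (fun v v' => by
        show Cᵀ.mulVec (v.val + v'.val) = _
        erw [Matrix.mulVec_add])
  let ρp : ↥((f.hom.rangeSub.perp (stdWall P (g + k)).str).pos) →+ ((Fin g → ℤ) × (Fin g → H)) :=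
    AddMonoidHom.mk' (fun y => (Dᵀ.mulVec y.val.1, mulVecH Cᵀ y.val.2))
      (fun y y' => by
        refine Prod.ext ?_ ?_
        · show Dᵀ.mulVec (y.val.1 + y'.val.1) = _
          rw [Matrix.mulVec_add]
          rfl
        · show mulVecH Cᵀ (y.val.2 + y'.val.2) = _
          rw [mulVecH_add_right]
          rfl)
  refine ⟨{
    toHom := {
      hom := {
        neg := φn
        pos := φp
        comm := ?_ }
      isWall := ⟨?_, ?_, ?_, ?_⟩ }
    invHom := {
      hom := {
        neg := ρn
        pos := ρp
        comm := ?_ }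
      isWall := ⟨?_, ?_, ?_, ?_⟩ }
    left_neg := ?_
    right_neg := ?_
    left_pos := ?_
    right_pos := ?_ }⟩
  -- φ is an H-map
  · intro x h
    apply Subtype.ext
    refine Prod.ext ?_ ?_
    · show C.mulVec 0 = 0
      rw [Matrix.mulVec_zero]
    · show θ 0 + mulVecH D (fun i => x i • h) = fun j => D.mulVec x j • h
      erw [hθzero, zero_add, mulVecH_pi_smul]
  -- φ preserves λ
  · intro x y
    show ∑ i, D.mulVec x i * (C.mulVec y.1) i = ∑ i, x i * y.1 i
    erw [dotInt_mulVec, Matrix.mulVec_mulVec, hDC, Matrix.one_mulVec]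
  -- φ preserves μ
  · intro y y'
    show dotH (C.mulVec y'.1) (θ y.1 + mulVecH D y.2)
        + P.eps • dotH (C.mulVec y.1) (θ y'.1 + mulVecH D y'.2)
        = dotH y'.1 y.2 + P.eps • dotH y.1 y'.2
    rw [dotH_add_right, hdotCθ, hdotCD, zero_add, dotH_add_right, hdotCθ, hdotCD, zero_add]
  -- φ preserves α₋
  · intro x
    rfl
  -- φ preserves α₊
  · intro y
    show P.bd (dotH (C.mulVec y.1) (θ y.1 + mulVecH D y.2)) = P.bd (dotH y.1 y.2)
    rw [dotH_add_right, hdotCθ, hdotCD, zero_add]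
  -- ρ is an H-map
  · intro x h
    refine Prod.ext ?_ ?_
    · show Dᵀ.mulVec 0 = 0
      rw [Matrix.mulVec_zero]
    · show mulVecH Cᵀ (fun j => x.val j • h) = fun i => (Cᵀ.mulVec x.val) i • h
      erw [mulVecH_pi_smul]
  -- ρ preserves λ
  · rintro ⟨v, hv⟩ ⟨⟨c, s⟩, hy⟩
    obtain ⟨hy1, hy2⟩ := (memPos f (c, s)).mp hy
    show ∑ i, Cᵀ.mulVec v i * (Dᵀ.mulVec c) i = ∑ i, v i * c i
    erw [dotInt_mulVec, Matrix.transpose_transpose]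
    refine Finset.sum_congr rfl fun j _ => ?_
    rw [Matrix.mulVec_mulVec, hCDv c hy1]
  -- ρ preserves μ
  · rintro ⟨⟨c, s⟩, hy⟩ ⟨⟨c', s'⟩, hy'⟩
    obtain ⟨hy1, hy2⟩ := (memPos f (c, s)).mp hy
    obtain ⟨hy1', hy2'⟩ := (memPos f (c', s')).mp hy'
    show dotH (Dᵀ.mulVec c') (mulVecH Cᵀ s) + P.eps • dotH (Dᵀ.mulVec c) (mulVecH Cᵀ s')
        = dotH c' s + P.eps • dotH c s'
    rw [hkey c s c' hy1 hy2 hy1', hkey c' s' c hy1' hy2' hy1]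
  -- ρ preserves α₋
  · intro x
    rfl
  -- ρ preserves α₊
  · rintro ⟨⟨c, s⟩, hy⟩
    obtain ⟨hy1, hy2⟩ := (memPos f (c, s)).mp hy
    show P.bd (dotH (Dᵀ.mulVec c) (mulVecH Cᵀ s)) = P.bd (dotH c s)
    rw [hkey c s c hy1 hy2 hy1]
  -- left_neg
  · intro x
    show Cᵀ.mulVec (D.mulVec x) = x
    erw [Matrix.mulVec_mulVec, hCD, Matrix.one_mulVec]
  -- right_neg
  · rintro ⟨v, hv⟩
    apply Subtype.ext
    show D.mulVec (Cᵀ.mulVec v) = v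
    have hv' : Bᵀ.mulVec v = 0 := (memNeg f v).mp hv
    erw [Matrix.mulVec_mulVec, hDCone, Matrix.sub_mulVec, Matrix.one_mulVec,
      ← Matrix.mulVec_mulVec, hv', Matrix.mulVec_zero, sub_zero]
  -- left_pos
  · intro y
    refine Prod.ext ?_ ?_
    · show Dᵀ.mulVec (C.mulVec y.1) = y.1
      rw [Matrix.mulVec_mulVec, hDC, Matrix.one_mulVec]
    · show mulVecH Cᵀ (θ y.1 + mulVecH D y.2) = y.2
      rw [mulVecH_add_right, hθ]
      simp only
      rw [mulVecH_smul_right, ← mulVecH_mul, hCA, mulVecH_zero_matrix, smul_zero, zero_add,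
        ← mulVecH_mul, hCD, mulVecH_one]
  -- right_pos
  · rintro ⟨⟨c, s⟩, hy⟩
    obtain ⟨hy1, hy2⟩ := (memPos f (c, s)).mp hy
    apply Subtype.ext
    refine Prod.ext ?_ ?_
    · show C.mulVec (Dᵀ.mulVec c) = c
      rw [Matrix.mulVec_mulVec, hCDv c hy1]
    · show θ (Dᵀ.mulVec c) + mulVecH D (mulVecH Cᵀ s) = s
      rw [hθ]
      simp only
      rw [Matrix.mulVec_mulVec, hCDv c hy1, ← mulVecH_mul, hDCs c s hy1 hy2, neg_smul]
      abel

end Proof9Main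

/-- For positive integers `k, g` and a morphism
`f : W^k → W^{g+k}` of Wall forms, there is an isomorphism
`W^g ≅ f(W^k)^⊥`. -/
theorem statement_9 {H : Type} [AddCommGroup H] [AddGroup.FG H]
    (P : FormParameter H) (k g : ℕ) (hk : 0 < k) (hg : 0 < g)
    (f : WallHom (stdWall P k) (stdWall P (g + k))) :
    Nonempty (WallIso (stdWall P g)
      (f.hom.rangeSub.perp (stdWall P (g + k)).str).toWall) :=
  statement_9' P k g f
end

section
/- Let g be an integer with d(H) ≤ g − 1, and write d = d(H). Let y ∈ W^g₊. Then there exists a Wall form automorphism Φ : W^g → W^g such that Φ₊⁻¹(y) lies in the subgroup (W^{d+1} ⊕ 0)₊ ≤ W^g₊ corresponding to the first d+1 direct summands of W^g = W^{⊕g}. -/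
section Statement11Aux

/-! Auxiliary material for `statement_11`. -/

lemma exists_basis_smul' {R M : Type} [CommRing R] [IsDomain R] [IsPrincipalIdealRing R]
    [AddCommGroup M] [Module R M] {m : ℕ}
    (b0 : Module.Basis (Fin m) R M) (x : M) (hm : 0 < m) :
    ∃ (w : Module.Basis (Fin m) R M) (c : R), x = c • w ⟨0, hm⟩ := by
  classical
  obtain ⟨n, ⟨bM, bN, f, a, snf⟩⟩ :=
    Submodule.smithNormalForm b0 (Submodule.span R ({x} : Set M))
  have hx : x ∈ Submodule.span R ({x} : Set M) := Submodule.mem_span_singleton_self x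
  have hn : n ≤ 1 := by
    have h1 : (n : Cardinal) = Module.rank R (Submodule.span R ({x} : Set M)) := by
      simpa using bN.mk_eq_rank''
    have h2 : Module.rank R (Submodule.span R ({x} : Set M)) ≤ 1 := by
      simpa using rank_span_le (R := R) ({x} : Set M)
    have := h1 ▸ h2
    exact_mod_cast this
  interval_cases n
  · haveI : Subsingleton (Submodule.span R ({x} : Set M)) := bN.repr.toEquiv.subsingleton
    have : (⟨x, hx⟩ : Submodule.span R ({x} : Set M)) = 0 := Subsingleton.elim _ _
    have hx0 : x = 0 := by simpa using congrArg Subtype.val this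
    exact ⟨b0, 0, by simp [hx0]⟩
  · have hrep : (⟨x, hx⟩ : Submodule.span R ({x} : Set M))
        = (bN.repr ⟨x, hx⟩ 0) • bN 0 := by
      conv_lhs => rw [← bN.sum_repr ⟨x, hx⟩]
      simp
    have hxM : x = (bN.repr ⟨x, hx⟩ 0) • ((bN 0 : M)) := by
      simpa using congrArg Subtype.val hrep
    rw [snf 0] at hxM
    refine ⟨bM.reindex (Equiv.swap (f 0) ⟨0, hm⟩), bN.repr ⟨x, hx⟩ 0 * a 0, ?_⟩
    rw [Module.Basis.reindex_apply, Equiv.symm_swap, Equiv.swap_apply_right, ← smul_smul]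
    exact hxM

lemma exists_good_basis {g d : ℕ} (hgd : d + 1 ≤ g) (p : Fin g → ℤ)
    (L : (Fin g → ℤ) →ₗ[ℤ] (Fin d → ℤ)) :
    ∃ v : Module.Basis (Fin g) ℤ (Fin g → ℤ),
      ∀ i : Fin g, d + 1 ≤ (i : ℕ) → L (v i) = 0 ∧ v.repr p i = 0 := by
  classical
  obtain ⟨r, bR⟩ := Submodule.basisOfPid (Pi.basisFun ℤ (Fin d)) (LinearMap.range L)
  have hrd : r ≤ d := by
    have h1 : LinearIndependent ℤ (fun j => ((bR j : Fin d → ℤ))) :=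
      bR.linearIndependent.map' (LinearMap.range L).subtype (Submodule.ker_subtype _)
    have h2 := h1.fintype_card_le_finrank
    simpa [Module.finrank_fin_fun] using h2
  choose u hu using fun j => LinearMap.mem_range.mp (bR j).2
  have hdec : ∀ z : Fin g → ℤ, ∃ c : Fin r → ℤ,
      z - ∑ j, c j • u j ∈ LinearMap.ker L := by
    intro z
    refine ⟨fun j => bR.repr ⟨L z, LinearMap.mem_range_self L z⟩ j, ?_⟩
    rw [LinearMap.mem_ker, map_sub, map_sum]
    simp_rw [map_smul, hu]
    rw [sub_eq_zero]
    have h3 := congrArg Subtype.val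
      (bR.sum_repr ⟨L z, LinearMap.mem_range_self L z⟩)
    rw [Submodule.coe_sum] at h3
    simp only [Submodule.coe_smul, zsmul_eq_mul] at h3
    exact h3.symm
  have hindepmod : ∀ c : Fin r → ℤ, (∑ j, c j • u j) ∈ LinearMap.ker L → c = 0 := by
    intro c hc
    have h0 : (∑ j, c j • bR j) = 0 := by
      apply Subtype.ext
      have : L (∑ j, c j • u j) = 0 := hc
      rw [map_sum] at this
      simp_rw [map_smul, hu] at this
      simpa using this
    funext j
    exact Fintype.linearIndependent_iff.mp bR.linearIndependent c h0 j
  have hKspan : ∀ {m' : ℕ} (bb : Module.Basis (Fin m') ℤ (LinearMap.ker L)),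
      (LinearMap.ker L : Set (Fin g → ℤ)) ⊆
        ↑(Submodule.span ℤ (Set.range fun k => ((bb k : Fin g → ℤ)))) := by
    intro m' bb z hz
    have h4 := congrArg Subtype.val (bb.sum_repr ⟨z, hz⟩)
    refine (Submodule.mem_span_range_iff_exists_fun ℤ).mpr ⟨fun k => bb.repr ⟨z, hz⟩ k, ?_⟩
    rw [Submodule.coe_sum] at h4
    simp only [Submodule.coe_smul, zsmul_eq_mul] at h4
    exact h4
  have key : ∀ {m' : ℕ} (bb : Module.Basis (Fin m') ℤ (LinearMap.ker L)),
      ∃ B : Module.Basis (Fin r ⊕ Fin m') ℤ (Fin g → ℤ),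
        (∀ j, B (Sum.inl j) = u j) ∧ (∀ k, B (Sum.inr k) = ↑(bb k)) := by
    intro m' bb
    have hindep : LinearIndependent ℤ (Sum.elim u fun k => ((bb k : Fin g → ℤ))) := by
      refine LinearIndependent.sum_type ?_
        (bb.linearIndependent.map' (LinearMap.ker L).subtype (Submodule.ker_subtype _)) ?_
      · rw [Fintype.linearIndependent_iff]
        intro c hc i
        have h5 := hindepmod c (by rw [hc]; exact (LinearMap.ker L).zero_mem)
        rw [h5]; rfl
      · rw [Submodule.disjoint_def]
        intro a ha hb
        obtain ⟨c, rfl⟩ := (Submodule.mem_span_range_iff_exists_fun ℤ).mp ha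
        have hK : (∑ j, c j • u j) ∈ LinearMap.ker L := by
          have hle : Submodule.span ℤ (Set.range fun k => ((bb k : Fin g → ℤ)))
              ≤ LinearMap.ker L := by
            rw [Submodule.span_le]; rintro _ ⟨k, rfl⟩; exact (bb k).2
          exact hle hb
        rw [hindepmod c hK]
        simp
    have hspan : ⊤ ≤ Submodule.span ℤ
        (Set.range (Sum.elim u fun k => ((bb k : Fin g → ℤ)))) := by
      intro z _
      obtain ⟨c, hc⟩ := hdec z
      rw [Set.Sum.elim_range, Submodule.span_union]
      have hz : z = (∑ j, c j • u j) + (z - ∑ j, c j • u j) := by abel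
      rw [hz]
      refine Submodule.add_mem_sup ?_ (hKspan bb hc)
      exact Submodule.sum_mem _ fun j _ =>
        Submodule.smul_mem _ _ (Submodule.subset_span ⟨j, rfl⟩)
    refine ⟨Module.Basis.mk hindep hspan, fun j => ?_, fun k => ?_⟩
    · rw [Module.Basis.mk_apply]; rfl
    · rw [Module.Basis.mk_apply]; rfl
  obtain ⟨m, bK⟩ := Submodule.basisOfPid (Pi.basisFun ℤ (Fin g)) (LinearMap.ker L)
  obtain ⟨B0, hB0l, hB0r⟩ := key bK
  have hrm : r + m = g := by
    have e0 := B0.indexEquiv (Pi.basisFun ℤ (Fin g))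
    simpa using Fintype.card_congr e0
  have hm : 0 < m := by omega
  obtain ⟨c₀, hc₀⟩ := hdec p
  obtain ⟨w, cc, hwc⟩ := exists_basis_smul' bK ⟨p - ∑ j, c₀ j • u j, hc₀⟩ hm
  obtain ⟨B, hBl, hBr⟩ := key w
  let e : (Fin r ⊕ Fin m) ≃ Fin g := finSumFinEquiv.trans (finCongr hrm)
  have hp : p = (∑ j, c₀ j • B (Sum.inl j)) + cc • B (Sum.inr ⟨0, hm⟩) := by
    have h6 : p - ∑ j, c₀ j • u j = cc • ((w ⟨0, hm⟩ : Fin g → ℤ)) := by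
      have := congrArg Subtype.val hwc
      simpa using this
    rw [hBr]
    simp_rw [hBl]
    rw [← h6]
    abel
  refine ⟨B.reindex e, ?_⟩
  intro i hi
  rcases h : e.symm i with j | k
  · exfalso
    have hi' : e (Sum.inl j) = i := by rw [← h, Equiv.apply_symm_apply]
    have : (i : ℕ) = (j : ℕ) := by
      rw [← hi']
      simp [e, finSumFinEquiv_apply_left]
    omega
  · have hi' : e (Sum.inr k) = i := by rw [← h, Equiv.apply_symm_apply]
    have hik : (i : ℕ) = r + (k : ℕ) := by
      rw [← hi']
      simp [e, finSumFinEquiv_apply_right]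
    constructor
    · rw [Module.Basis.reindex_apply, h, hBr]
      exact (w k).2
    · have hk0 : (⟨0, hm⟩ : Fin m) ≠ k := by
        intro hkk
        rw [← hkk] at hik
        simp at hik
        omega
      have h7 : (B.reindex e).repr p i = B.repr p (Sum.inr k) := by
        rw [← hi', B.repr_reindex_apply, Equiv.symm_apply_apply]
      rw [h7, hp, map_add, map_sum]
      simp only [map_smul, Module.Basis.repr_self, Finsupp.coe_smul, Pi.smul_apply,
        Finsupp.single_apply, Finsupp.coe_finset_sum, Finset.sum_apply]
      simp [hk0]

lemma key_sum {g : ℕ} (B A : Matrix (Fin g) (Fin g) ℤ) (hBA : B * A = 1)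
    {H : Type} [AddCommGroup H] (c : Fin g → ℤ) (v : Fin g → H) :
    ∑ i, (∑ k, c k * B k i) • (∑ j, A i j • v j) = ∑ i, c i • v i := by
  have h1 : ∀ i, (∑ k, c k * B k i) • (∑ j, A i j • v j)
      = ∑ k, ∑ j, (c k * (B k i * A i j)) • v j := by
    intro i
    rw [Finset.sum_smul]
    congr 1; funext k
    rw [Finset.smul_sum]
    congr 1; funext j
    rw [smul_smul, mul_assoc]
  calc ∑ i, (∑ k, c k * B k i) • (∑ j, A i j • v j)
      = ∑ i, ∑ k, ∑ j, (c k * (B k i * A i j)) • v j :=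
        Finset.sum_congr rfl fun i _ => h1 i
    _ = ∑ k, ∑ j, ∑ i, (c k * (B k i * A i j)) • v j := by
        rw [Finset.sum_comm]
        congr 1; funext k
        rw [Finset.sum_comm]
    _ = ∑ k, ∑ j, (c k * (B * A) k j) • v j := by
        congr 1; funext k; congr 1; funext j
        rw [← Finset.sum_smul]
        congr 1
        rw [← Finset.mul_sum, Matrix.mul_apply]
    _ = ∑ k, c k • v k := by
        rw [hBA]
        congr 1; funext k
        rw [Finset.sum_congr rfl (fun j _ => by rw [Matrix.one_apply])]
        simp [Finset.sum_ite_eq, mul_ite]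

lemma mulVec_assoc_sum {g : ℕ} (B A : Matrix (Fin g) (Fin g) ℤ) (hBA : B * A = 1)
    {H : Type} [AddCommGroup H] (v : Fin g → H) (i : Fin g) :
    ∑ j, B i j • (∑ k, A j k • v k) = v i := by
  have h1 : ∀ j, B i j • (∑ k, A j k • v k) = ∑ k, (B i j * A j k) • v k := by
    intro j
    rw [Finset.smul_sum]
    congr 1; funext k
    rw [smul_smul]
  calc ∑ j, B i j • (∑ k, A j k • v k) = ∑ j, ∑ k, (B i j * A j k) • v k :=
        Finset.sum_congr rfl fun j _ => h1 j
    _ = ∑ k, ∑ j, (B i j * A j k) • v k := Finset.sum_comm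
    _ = ∑ k, (B * A) i k • v k := by
        congr 1; funext k
        rw [← Finset.sum_smul, Matrix.mul_apply]
    _ = v i := by
        rw [hBA]
        rw [Finset.sum_congr rfl (fun k _ => by rw [Matrix.one_apply])]
        simp [Finset.sum_ite_eq]

lemma vecMul_assoc_sum {g : ℕ} (B A : Matrix (Fin g) (Fin g) ℤ) (hBA : B * A = 1)
    (c : Fin g → ℤ) (i : Fin g) :
    ∑ j, (∑ k, c k * B k j) * A j i = c i := by
  calc ∑ j, (∑ k, c k * B k j) * A j i
      = ∑ j, ∑ k, c k * B k j * A j i :=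
        Finset.sum_congr rfl fun j _ => by rw [Finset.sum_mul]
    _ = ∑ k, ∑ j, c k * B k j * A j i := Finset.sum_comm
    _ = ∑ k, c k * (B * A) k i := by
        congr 1; funext k
        rw [Matrix.mul_apply, Finset.mul_sum]
        congr 1; funext j
        ring
    _ = c i := by
        rw [hBA]
        rw [Finset.sum_congr rfl (fun k _ => by rw [Matrix.one_apply])]
        simp [Finset.sum_ite_eq, mul_ite]

variable {H : Type} [AddCommGroup H]

/-- The negative part of the morphism of `W^g` induced by a matrix. -/
def matNeg {g : ℕ} (A : Matrix (Fin g) (Fin g) ℤ) :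
    (Fin g → ℤ) →+ (Fin g → ℤ) where
  toFun := fun x i => ∑ j, A i j * x j
  map_zero' := by funext i; simp
  map_add' := by
    intro x y; funext i; simp [mul_add, Finset.sum_add_distrib]

/-- The positive part of the morphism of `W^g` induced by a pair of matrices. -/
def matPos {g : ℕ} (A B : Matrix (Fin g) (Fin g) ℤ) :
    ((Fin g → ℤ) × (Fin g → H)) →+ ((Fin g → ℤ) × (Fin g → H)) where
  toFun := fun w => (fun i => ∑ j, w.1 j * B j i, fun i => ∑ j, A i j • w.2 j)
  map_zero' := by refine Prod.ext ?_ ?_ <;> funext i <;> simp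
  map_add' := by
    intro w w'
    refine Prod.ext ?_ ?_ <;> funext i
    · simp [add_mul, Finset.sum_add_distrib]
    · simp [smul_add, Finset.sum_add_distrib]

/-- The Wall form morphism of `W^g` induced by a pair of matrices. -/
def matHom [AddGroup.FG H] (P : FormParameter H) {g : ℕ}
    (A B : Matrix (Fin g) (Fin g) ℤ) (hBA : B * A = 1) :
    WallHom (stdWall P g) (stdWall P g) where
  hom :=
    { neg := matNeg A
      pos := matPos A B
      comm := by
        intro x h
        refine Prod.ext ?_ ?_
        · funext i
          show ∑ j, (0 : Fin g → ℤ) j * B j i = (0 : Fin g → ℤ) i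
          simp
        · funext i
          show ∑ j, A i j • (x j • h) = (∑ j, A i j * x j) • h
          rw [Finset.sum_smul]
          exact Finset.sum_congr rfl fun j _ => smul_smul _ _ _ }
  isWall := by
    refine ⟨?_, ?_, ?_, ?_⟩
    · intro x w
      show ∑ i, (∑ j, A i j * x j) * (∑ k, w.1 k * B k i) = ∑ i, x i * w.1 i
      have h8 := key_sum B A hBA w.1 x
      simp only [smul_eq_mul] at h8
      calc ∑ i, (∑ j, A i j * x j) * (∑ k, w.1 k * B k i)
          = ∑ i, (∑ k, w.1 k * B k i) * (∑ j, A i j * x j) :=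
            Finset.sum_congr rfl fun i _ => mul_comm _ _
        _ = ∑ i, w.1 i * x i := h8
        _ = ∑ i, x i * w.1 i := Finset.sum_congr rfl fun i _ => mul_comm _ _
    · intro w w'
      show (∑ i, (∑ k, w'.1 k * B k i) • (∑ j, A i j • w.2 j))
            + P.eps • ∑ i, (∑ k, w.1 k * B k i) • (∑ j, A i j • w'.2 j)
          = (∑ i, w'.1 i • w.2 i) + P.eps • ∑ i, w.1 i • w'.2 i
      rw [key_sum B A hBA w'.1 w.2, key_sum B A hBA w.1 w'.2]
    · intro x
      rfl
    · intro w
      show P.bd (∑ i, (∑ k, w.1 k * B k i) • (∑ j, A i j • w.2 j))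
          = P.bd (∑ i, w.1 i • w.2 i)
      rw [key_sum B A hBA w.1 w.2]

/-- The Wall form automorphism of `W^g` induced by a matrix in `GL_g(ℤ)`. -/
def matIso [AddGroup.FG H] (P : FormParameter H) {g : ℕ}
    (A B : Matrix (Fin g) (Fin g) ℤ) (hAB : A * B = 1) (hBA : B * A = 1) :
    WallIso (stdWall P g) (stdWall P g) where
  toHom := matHom P A B hBA
  invHom := matHom P B A hAB
  left_neg := by
    intro x
    funext i
    show ∑ j, B i j * (∑ k, A j k * x k) = x i
    simpa only [smul_eq_mul] using mulVec_assoc_sum B A hBA x i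
  right_neg := by
    intro x
    funext i
    show ∑ j, A i j * (∑ k, B j k * x k) = x i
    simpa only [smul_eq_mul] using mulVec_assoc_sum A B hAB x i
  left_pos := by
    intro w
    refine Prod.ext ?_ ?_ <;> funext i
    · show ∑ j, (∑ k, w.1 k * B k j) * A j i = w.1 i
      exact vecMul_assoc_sum B A hBA w.1 i
    · show ∑ j, B i j • (∑ k, A j k • w.2 k) = w.2 i
      exact mulVec_assoc_sum B A hBA w.2 i
  right_pos := by
    intro w
    refine Prod.ext ?_ ?_ <;> funext i
    · show ∑ j, (∑ k, w.1 k * A k j) * B j i = w.1 i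
      exact vecMul_assoc_sum A B hAB w.1 i
    · show ∑ j, A i j • (∑ k, B j k • w.2 k) = w.2 i
      exact mulVec_assoc_sum A B hAB w.2 i

lemma exists_dlen_surj (H : Type) [AddCommGroup H] [AddGroup.FG H] :
    ∃ φ : (Fin (dlen H) → ℤ) →+ H, Function.Surjective φ := by
  have hne : {k : ℕ | ∃ φ : (Fin k → ℤ) →+ H, Function.Surjective φ}.Nonempty := by
    haveI : Module.Finite ℤ H := Module.Finite.iff_addGroup_fg.mpr ‹AddGroup.FG H›
    obtain ⟨n, f, hf⟩ := Module.Finite.exists_fin' ℤ H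
    exact ⟨n, f.toAddMonoidHom, hf⟩
  exact Nat.sInf_mem hne

end Statement11Aux

/-- If `d(H) ≤ g - 1` and `y ∈ W^g₊`, there is an
automorphism `Φ` of `W^g` with `Φ₊⁻¹(y)` contained in the subgroup
corresponding to the first `d(H) + 1` direct summands of `W^g`. -/
theorem statement_11 {H : Type} [AddCommGroup H] [AddGroup.FG H]
    (P : FormParameter H) (g : ℕ) (hg : dlen H + 1 ≤ g)
    (y : (stdWall P g).carrier.Pos) :
    ∃ Φ : WallIso (stdWall P g) (stdWall P g),
      ∀ i : Fin g, dlen H + 1 ≤ (i : ℕ) →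
        (Φ.invHom.hom.pos y).1 i = 0 ∧ (Φ.invHom.hom.pos y).2 i = 0 := by
    classical
  obtain ⟨φ, hφ⟩ := exists_dlen_surj H
  choose pre hpre using fun j => hφ (y.2 j)
  let L : (Fin g → ℤ) →ₗ[ℤ] (Fin (dlen H) → ℤ) :=
    { toFun := fun x => ∑ j, x j • pre j
      map_add' := by
        intro x x'
        simp [add_smul, Finset.sum_add_distrib]
      map_smul' := by
        intro c x
        simp [Finset.smul_sum, smul_smul, mul_smul] }
  obtain ⟨v, hv⟩ := exists_good_basis hg y.1 L
  let A : Matrix (Fin g) (Fin g) ℤ := Matrix.of fun j i => v.repr (Pi.single j 1) i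
  let B : Matrix (Fin g) (Fin g) ℤ := Matrix.of fun i j => v i j
  have hsingle : ∀ z : Fin g → ℤ, ∑ j, z j • Pi.single j (1 : ℤ) = z := by
    intro z
    calc ∑ j, z j • Pi.single j (1 : ℤ) = ∑ j, Pi.single j (z j) :=
          Finset.sum_congr rfl fun j _ => by
            rw [← Pi.single_smul, smul_eq_mul, mul_one]
      _ = z := Finset.univ_sum_single z
  have hrepr : ∀ (z : Fin g → ℤ) (k : Fin g),
      ∑ j, z j * v.repr (Pi.single j 1) k = v.repr z k := by
    intro z k
    conv_rhs => rw [← hsingle z]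
    rw [map_sum, Finsupp.coe_finset_sum, Finset.sum_apply]
    refine Finset.sum_congr rfl fun j _ => ?_
    rw [map_smul, Finsupp.smul_apply, smul_eq_mul]
  have hBA : B * A = 1 := by
    ext i k
    rw [Matrix.mul_apply, Matrix.one_apply]
    show (∑ j, v i j * v.repr (Pi.single j 1) k) = _
    rw [hrepr (v i) k, Module.Basis.repr_self, Finsupp.single_apply]
  have hAB : A * B = 1 := mul_eq_one_comm.mpr hBA
  refine ⟨matIso P A B hAB hBA, ?_⟩
  intro i hi
  constructor
  · show ∑ j, y.1 j * A j i = 0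
    have := hrepr y.1 i
    show ∑ j, y.1 j * v.repr (Pi.single j 1) i = 0
    rw [this, (hv i hi).2]
  · show ∑ j, B i j • y.2 j = 0
    have hL : L (v i) = 0 := (hv i hi).1
    have hLv : ∑ j, (v i) j • pre j = 0 := hL
    calc ∑ j, B i j • y.2 j = ∑ j, (v i) j • φ (pre j) := by
          refine Finset.sum_congr rfl fun j _ => ?_
          rw [hpre j]
          rfl
      _ = φ (∑ j, (v i) j • pre j) := by
          rw [map_sum]
          refine Finset.sum_congr rfl fun j _ => ?_
          rw [map_zsmul]
      _ = 0 := by rw [hLv, map_zero]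
end

section
/- Let g be a positive integer and let x ∈ W^g₋. Then there exists a Wall form automorphism Φ : W^g → W^g such that Φ₋⁻¹(x) lies in the subgroup (W¹ ⊕ 0)₋ ≤ W^g₋ corresponding to the first direct summand of W^g = W^{⊕g}. -/
section Stmt12Matrix
open Matrix

variable {H : Type} [AddCommGroup H]

/-- Componentwise action of an integer matrix on `H^g`. -/
def cMapH {g : ℕ} (M : Matrix (Fin g) (Fin g) ℤ) : (Fin g → H) →+ (Fin g → H) where
  toFun w := fun i => ∑ j, M i j • w j
  map_zero' := by funext i; simp
  map_add' w w' := by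
    funext i
    simp [smul_add, Finset.sum_add_distrib]

lemma cMapH_cMapH {g : ℕ} (M N : Matrix (Fin g) (Fin g) ℤ) (w : Fin g → H) :
    cMapH M (cMapH N w) = cMapH (M * N) w := by
  funext i
  show ∑ j, M i j • ∑ k, N j k • w k = ∑ k, (M * N) i k • w k
  simp only [Finset.smul_sum, smul_smul, Matrix.mul_apply, Finset.sum_smul]
  exact Finset.sum_comm

lemma cMapH_one {g : ℕ} (w : Fin g → H) : cMapH (1 : Matrix (Fin g) (Fin g) ℤ) w = w := by
  funext i
  show ∑ j, (1 : Matrix (Fin g) (Fin g) ℤ) i j • w j = w i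
  simp [Matrix.one_apply]

lemma pair_cMapH {g : ℕ} (M : Matrix (Fin g) (Fin g) ℤ) (a : Fin g → ℤ) (w : Fin g → H) :
    ∑ i, a i • cMapH (H := H) M w i = ∑ k, (Mᵀ *ᵥ a) k • w k := by
  show ∑ i, a i • ∑ k, M i k • w k = _
  simp only [Finset.smul_sum, smul_smul, Matrix.mulVec, dotProduct,
    Matrix.transpose_apply, Finset.sum_smul]
  rw [Finset.sum_comm]
  refine Finset.sum_congr rfl fun k _ => Finset.sum_congr rfl fun i _ => by rw [mul_comm]

lemma pair_inv {g : ℕ} {M N : Matrix (Fin g) (Fin g) ℤ} (hNM : N * M = 1)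
    (v : Fin g → ℤ) (w : Fin g → H) :
    ∑ i, (Nᵀ *ᵥ v) i • cMapH (H := H) M w i = ∑ i, v i • w i := by
  rw [pair_cMapH, Matrix.mulVec_mulVec, ← Matrix.transpose_mul, hNM, Matrix.transpose_one,
    Matrix.one_mulVec]

lemma dot_inv {g : ℕ} {M N : Matrix (Fin g) (Fin g) ℤ} (hNM : N * M = 1)
    (x v : Fin g → ℤ) :
    ∑ i, (M *ᵥ x) i * (Nᵀ *ᵥ v) i = ∑ i, x i * v i := by
  show (M *ᵥ x) ⬝ᵥ (Nᵀ *ᵥ v) = x ⬝ᵥ v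
  rw [Matrix.dotProduct_mulVec, Matrix.vecMul_transpose, Matrix.mulVec_mulVec, hNM,
    Matrix.one_mulVec]

/-- The `cons` linear equivalence `ℤ × ℤ^k ≃ ℤ^(k+1)`. -/
def consLE (k : ℕ) : (ℤ × (Fin k → ℤ)) ≃ₗ[ℤ] (Fin (k + 1) → ℤ) where
  toFun p := Fin.cons p.1 p.2
  invFun y := (y 0, fun j => y j.succ)
  map_add' p q := by
    funext i
    refine Fin.cases ?_ (fun j => ?_) i <;> simp
  map_smul' c p := by
    funext i
    refine Fin.cases ?_ (fun j => ?_) i <;> simp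
  left_inv p := by simp
  right_inv y := by
    funext i
    refine Fin.cases ?_ (fun j => ?_) i <;> simp

end Stmt12Matrix


lemma exists_good_equiv (k : ℕ) (x : Fin (k + 1) → ℤ) :
    ∃ A : (Fin (k + 1) → ℤ) ≃ₗ[ℤ] (Fin (k + 1) → ℤ),
      ∀ i : Fin (k + 1), 1 ≤ (i : ℕ) → A x i = 0 := by
  by_cases hx : x = 0
  · exact ⟨LinearEquiv.refl ℤ _, fun i _ => by simp [hx]⟩
  · set ev : ((Fin (k + 1) → ℤ) →ₗ[ℤ] ℤ) →+ ℤ :=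
      { toFun := fun φ => φ x, map_zero' := rfl, map_add' := fun φ ψ => rfl } with hev
    obtain ⟨d, hd⟩ := Int.subgroup_cyclic ev.range
    have hmem : ∀ i, x i ∈ ev.range := fun i => ⟨LinearMap.proj i, rfl⟩
    have hdvd : ∀ i, d ∣ x i := by
      intro i
      have h1 := hmem i
      rw [hd, AddSubgroup.mem_closure_singleton] at h1
      obtain ⟨n, hn⟩ := h1
      exact ⟨n, by rw [← hn, smul_eq_mul, mul_comm]⟩
    have hdmem : d ∈ ev.range := by
      rw [hd]; exact AddSubgroup.subset_closure rfl
    obtain ⟨φ, hφ⟩ := hdmem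
    have hφx : φ x = d := hφ
    have hd0 : d ≠ 0 := by
      obtain ⟨i, hi⟩ := Function.ne_iff.mp hx
      intro h
      apply hi
      have := hdvd i
      rw [h] at this
      simpa using this
    set u : Fin (k + 1) → ℤ := fun i => x i / d with hu
    have hxu : x = d • u := by
      funext i
      exact (Int.mul_ediv_cancel' (hdvd i)).symm
    have hφu : φ u = 1 := by
      have h2 : d * 1 = d * φ u := by
        rw [mul_one]
        calc d = φ x := hφx.symm
          _ = φ (d • u) := by rw [← hxu]
          _ = d * φ u := by rw [map_smul, smul_eq_mul]
      exact (mul_left_cancel₀ hd0 h2).symm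
    set e : (ℤ × (LinearMap.ker φ)) ≃ₗ[ℤ] (Fin (k + 1) → ℤ) :=
      { toFun := fun p => p.1 • u + (p.2 : Fin (k + 1) → ℤ)
        map_add' := fun p q => by
          simp only [Prod.fst_add, Prod.snd_add, Submodule.coe_add, add_smul]
          abel
        map_smul' := fun c p => by
          simp [smul_smul, smul_add, mul_assoc]
        invFun := fun y => (φ y, ⟨y - φ y • u, by
          rw [LinearMap.mem_ker, map_sub, map_smul, hφu, smul_eq_mul, mul_one, sub_self]⟩)
        left_inv := fun p => by
          have h2 : φ (p.2 : Fin (k + 1) → ℤ) = 0 := p.2.2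
          have h3 : φ (p.1 • u + (p.2 : Fin (k + 1) → ℤ)) = p.1 := by
            rw [map_add, map_smul, hφu, h2, smul_eq_mul, mul_one, add_zero]
          refine Prod.ext h3 (Subtype.ext ?_)
          show p.1 • u + (p.2 : Fin (k + 1) → ℤ)
              - φ (p.1 • u + (p.2 : Fin (k + 1) → ℤ)) • u = (p.2 : Fin (k + 1) → ℤ)
          rw [h3]
          abel
        right_inv := fun y => by
          show φ y • u + (y - φ y • u) = y
          abel } with he
    obtain ⟨n, bN⟩ := Submodule.basisOfPid (Pi.basisFun ℤ (Fin (k + 1))) (LinearMap.ker φ)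
    haveI := Module.Finite.of_basis bN
    haveI := Module.Free.of_basis bN
    have hrank : Module.finrank ℤ (ℤ × LinearMap.ker φ) = k + 1 := by
      rw [e.finrank_eq]
      simp [Module.finrank_fin_fun]
    rw [Module.finrank_prod, Module.finrank_self, Module.finrank_eq_card_basis bN,
      Fintype.card_fin] at hrank
    have hn : n = k := by omega
    set b' : Module.Basis (Fin k) ℤ (LinearMap.ker φ) := bN.reindex (finCongr hn) with hb'
    refine ⟨e.symm.trans (((LinearEquiv.refl ℤ ℤ).prodCongr b'.equivFun).trans (consLE k)), ?_⟩
    intro i hi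
    have hesymm : e.symm x = (d, (0 : LinearMap.ker φ)) := by
      rw [LinearEquiv.symm_apply_eq]
      show x = d • u + ((0 : LinearMap.ker φ) : Fin (k + 1) → ℤ)
      simp [← hxu]
    rw [LinearEquiv.trans_apply, LinearEquiv.trans_apply, hesymm]
    show consLE k (((LinearEquiv.refl ℤ ℤ).prodCongr b'.equivFun) (d, 0)) i = 0
    rw [LinearEquiv.prodCongr_apply]
    simp only [LinearEquiv.refl_apply, map_zero]
    show (Fin.cons d (0 : Fin k → ℤ) : Fin (k+1) → ℤ) i = 0
    revert hi
    refine Fin.cases ?_ (fun j => ?_) i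
    · intro hi; exact absurd hi (by simp)
    · intro _; simp


section Stmt12Wall
open Matrix

variable {H : Type} [AddCommGroup H] [AddGroup.FG H] {P : FormParameter H}

/-- A pair of mutually inverse integer matrices induces a Wall-form endomorphism
of the standard Wall form. -/
def stdHomM {g : ℕ} (M N : Matrix (Fin g) (Fin g) ℤ) (hNM : N * M = 1) :
    WallHom (stdWall P g) (stdWall P g) where
  hom :=
    { neg := (Matrix.mulVecLin M).toAddMonoidHom
      pos := AddMonoidHom.prodMap (Matrix.mulVecLin Nᵀ).toAddMonoidHom (cMapH M)
      comm := by
        intro x h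
        refine Prod.ext ?_ ?_
        · show Nᵀ *ᵥ (0 : Fin g → ℤ) = 0
          simp
        · show cMapH M (fun i => x i • h) = fun i => (M *ᵥ x) i • h
          funext i
          show ∑ j, M i j • x j • h = (∑ j, M i j * x j) • h
          simp [smul_smul, Finset.sum_smul] }
  isWall := by
    refine ⟨?_, ?_, ?_, ?_⟩
    · intro x y
      show ∑ i, (M *ᵥ x) i * (Nᵀ *ᵥ y.1) i = ∑ i, x i * y.1 i
      exact dot_inv hNM x y.1
    · intro y y'
      show (∑ i, (Nᵀ *ᵥ y'.1) i • cMapH M y.2 i)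
          + P.eps • ∑ i, (Nᵀ *ᵥ y.1) i • cMapH M y'.2 i
          = (∑ i, y'.1 i • y.2 i) + P.eps • ∑ i, y.1 i • y'.2 i
      rw [pair_inv hNM, pair_inv hNM]
    · intro x; rfl
    · intro y
      show P.bd (∑ i, (Nᵀ *ᵥ y.1) i • cMapH M y.2 i) = P.bd (∑ i, y.1 i • y.2 i)
      rw [pair_inv hNM]

/-- A pair of mutually inverse integer matrices induces a Wall-form automorphism
of the standard Wall form. -/
def stdIsoM {g : ℕ} (M N : Matrix (Fin g) (Fin g) ℤ) (hMN : M * N = 1) (hNM : N * M = 1) :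
    WallIso (stdWall P g) (stdWall P g) where
  toHom := stdHomM M N hNM
  invHom := stdHomM N M hMN
  left_neg := fun x => by
    show N *ᵥ (M *ᵥ x) = x
    exact (fun v => by rw [Matrix.mulVec_mulVec, hNM, Matrix.one_mulVec] :
      ∀ v : Fin g → ℤ, N *ᵥ (M *ᵥ v) = v) x
  right_neg := fun x => by
    show M *ᵥ (N *ᵥ x) = x
    exact (fun v => by rw [Matrix.mulVec_mulVec, hMN, Matrix.one_mulVec] :
      ∀ v : Fin g → ℤ, M *ᵥ (N *ᵥ v) = v) x
  left_pos := fun y => by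
    refine Prod.ext ?_ ?_
    · show Mᵀ *ᵥ (Nᵀ *ᵥ y.1) = y.1
      rw [Matrix.mulVec_mulVec, ← Matrix.transpose_mul, hNM, Matrix.transpose_one,
        Matrix.one_mulVec]
    · show cMapH N (cMapH M y.2) = y.2
      rw [cMapH_cMapH, hNM, cMapH_one]
  right_pos := fun y => by
    refine Prod.ext ?_ ?_
    · show Nᵀ *ᵥ (Mᵀ *ᵥ y.1) = y.1
      rw [Matrix.mulVec_mulVec, ← Matrix.transpose_mul, hMN, Matrix.transpose_one,
        Matrix.one_mulVec]
    · show cMapH M (cMapH N y.2) = y.2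
      rw [cMapH_cMapH, hMN, cMapH_one]

end Stmt12Wall

/-- For `x ∈ W^g₋` there is an automorphism `Φ` of `W^g`
with `Φ₋⁻¹(x)` contained in the subgroup corresponding to the first direct
summand of `W^g`. -/
theorem statement_12 {H : Type} [AddCommGroup H] [AddGroup.FG H]
    (P : FormParameter H) (g : ℕ) (hg : 0 < g)
    (x : (stdWall P g).carrier.Neg) :
    ∃ Φ : WallIso (stdWall P g) (stdWall P g),
      ∀ i : Fin g, 1 ≤ (i : ℕ) → Φ.invHom.hom.neg x i = 0 := by
  obtain ⟨k, rfl⟩ : ∃ k, g = k + 1 := ⟨g - 1, by omega⟩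
  obtain ⟨A, hA⟩ := exists_good_equiv k x
  have hid1 : ((A.symm : (Fin (k+1) → ℤ) →ₗ[ℤ] (Fin (k+1) → ℤ)).comp
      (A : (Fin (k+1) → ℤ) →ₗ[ℤ] (Fin (k+1) → ℤ))) = LinearMap.id :=
    LinearMap.ext fun v => by simp
  have hid2 : ((A : (Fin (k+1) → ℤ) →ₗ[ℤ] (Fin (k+1) → ℤ)).comp
      (A.symm : (Fin (k+1) → ℤ) →ₗ[ℤ] (Fin (k+1) → ℤ))) = LinearMap.id :=
    LinearMap.ext fun v => by simp
  have hMN : LinearMap.toMatrix' (A.symm : (Fin (k+1) → ℤ) →ₗ[ℤ] (Fin (k+1) → ℤ))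
      * LinearMap.toMatrix' (A : (Fin (k+1) → ℤ) →ₗ[ℤ] (Fin (k+1) → ℤ)) = 1 := by
    rw [← LinearMap.toMatrix'_comp, hid1, LinearMap.toMatrix'_id]
  have hNM : LinearMap.toMatrix' (A : (Fin (k+1) → ℤ) →ₗ[ℤ] (Fin (k+1) → ℤ))
      * LinearMap.toMatrix' (A.symm : (Fin (k+1) → ℤ) →ₗ[ℤ] (Fin (k+1) → ℤ)) = 1 := by
    rw [← LinearMap.toMatrix'_comp, hid2, LinearMap.toMatrix'_id]
  refine ⟨stdIsoM _ _ hMN hNM, ?_⟩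
  intro i hi
  have key : Matrix.mulVecLin
      (LinearMap.toMatrix' (A : (Fin (k+1) → ℤ) →ₗ[ℤ] (Fin (k+1) → ℤ)))
      = (A : (Fin (k+1) → ℤ) →ₗ[ℤ] (Fin (k+1) → ℤ)) := by
    rw [← Matrix.toLin'_apply', Matrix.toLin'_toMatrix']
  show Matrix.mulVecLin
      (LinearMap.toMatrix' (A : (Fin (k+1) → ℤ) →ₗ[ℤ] (Fin (k+1) → ℤ))) x i = 0
  rw [key]
  exact hA i hi
end
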